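/- arXiv:1706.07603 — 6 statements merged into one kernel-verified Lean document; each statement's English description precedes it below -/
import Mathlib

section
/- Let α_1,...,α_s ∈ ℕ^s be points each of whose coordinate sums is at most d. Consider the hyperplane in ℝ^s through α_1,...,α_s (assumed affinely independent), written as a'_1 x_1 + ... + a'_s x_s = b' where a'_i is the (1,i)-cofactor of the (s+1)×(s+1) determinant with first row (x_1,...,x_s,1) and remaining rows (α_{i1},...,α_{is},1). Then |a'_i| ≤ s·d^{s−1} for each i. -/
open MvPolynomial Pointwise

/-- `J` is the integral closure of the ideal `I`: the set of elements `x` satisfying an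
integral relation `x^n + a_1 x^{n-1} + ... + a_n = 0` with `a_i ∈ I^i`. -/
def IsIntClosure {R : Type*} [CommRing R] (I J : Ideal R) : Prop :=
  ∀ x : R, x ∈ J ↔ ∃ n : ℕ, 0 < n ∧ ∃ a : ℕ → R, (∀ i, a i ∈ I ^ i) ∧
    x ^ n + ∑ i ∈ Finset.Icc 1 n, a i * x ^ (n - i) = 0

/-- A monomial ideal in a polynomial ring: an ideal generated by monomials. -/
def IsMonomialIdeal {k : Type*} [Field k] {σ : Type*} (I : Ideal (MvPolynomial σ k)) : Prop :=
  ∃ S : Set (σ →₀ ℕ), I = Ideal.span ((fun a => (monomial a (1 : k))) '' S)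

/-- depth of `R/J` with respect to the ideal `m`: the supremum of lengths of regular
sequences on `R/J` consisting of elements of `m`. -/
noncomputable def quotDepth {R : Type*} [CommRing R] (m J : Ideal R) : ℕ :=
  sSup {n : ℕ | ∃ rs : List R, rs.length = n ∧ (∀ x ∈ rs, x ∈ m) ∧
    RingTheory.Sequence.IsRegular (R ⧸ J) rs}

/-- `R/J` is Cohen-Macaulay: depth equals Krull dimension. -/
def QuotIsCM {R : Type*} [CommRing R] (m J : Ideal R) : Prop :=
  (quotDepth m J : WithBot ℕ∞) = ringKrullDim (R ⧸ J)

/-- Krull dimension of a ring, as a natural number. -/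
noncomputable def dimNat (R : Type*) [CommRing R] : ℕ :=
  ENat.toNat ((ringKrullDim R).unbotD 0)

/-- analytic spread of `I`: the Krull dimension of the fiber cone, i.e. of the
Rees algebra of `I` modulo the extension of the maximal ideal `m`. -/
noncomputable def analyticSpread {R : Type*} [CommRing R] (m I : Ideal R) : ℕ :=
  dimNat ((reesAlgebra I) ⧸ (Ideal.map (algebraMap R (reesAlgebra I)) m))

/-- height of an ideal: infimum of heights of primes containing it. -/
noncomputable def idealHeight {R : Type*} [CommRing R] (I : Ideal R) : ℕ∞ :=
  ⨅ p ∈ {p : PrimeSpectrum R | I ≤ p.asIdeal}, Order.height p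

/-- the maximal homogeneous ideal `(x_1,...,x_r)` of a polynomial ring. -/
noncomputable def maxIdeal (k : Type*) [Field k] (σ : Type*) : Ideal (MvPolynomial σ k) :=
  Ideal.span (Set.range X)

/-- exponent set of a monomial ideal, viewed in `ℝ^r`. -/
def expSet {k : Type*} [Field k] {r : ℕ} (I : Ideal (MvPolynomial (Fin r) k)) :
    Set (Fin r → ℝ) :=
  {x | ∃ a : Fin r →₀ ℕ, monomial a (1 : k) ∈ I ∧ x = fun i => (a i : ℝ)}

/-- Newton polyhedron of a monomial ideal: convex hull of the exponent set. -/
noncomputable def newtonPolyhedron {k : Type*} [Field k] {r : ℕ}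
    (I : Ideal (MvPolynomial (Fin r) k)) : Set (Fin r → ℝ) :=
  convexHull ℝ (expSet I)

/-- a simplicial complex on the vertex set `σ`: a downward closed family of finite sets. -/
def IsSimplicialComplex {σ : Type*} (Δ : Set (Finset σ)) : Prop :=
  ∅ ∈ Δ ∧ ∀ F ∈ Δ, ∀ G ⊆ F, G ∈ Δ

/-- Stanley-Reisner ideal of a simplicial complex: generated by the squarefree
monomials corresponding to non-faces. -/
noncomputable def srIdeal {k : Type*} [Field k] {σ : Type*} (Δ : Set (Finset σ)) :
    Ideal (MvPolynomial σ k) :=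
  Ideal.span {f | ∃ F : Finset σ, F ∉ Δ ∧ f = ∏ i ∈ F, X i}

/-- the degree complex `Δ_α(J)` of a monomial ideal `J`:
`F ∈ Δ_α(J)` iff `x^α ∉ J R_F`, i.e. no multiple of `x^α` by a monomial in the
variables of `F` lies in `J`. -/
def degComplex {k : Type*} [Field k] {r : ℕ} (J : Ideal (MvPolynomial (Fin r) k))
    (α : Fin r →₀ ℕ) : Set (Finset (Fin r)) :=
  {F | ∀ γ : Fin r →₀ ℕ, (∀ i, γ i ≠ 0 → i ∈ F) → monomial (α + γ) (1 : k) ∉ J}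

/-- an ideal is unmixed if all associated primes of `R/J` have the same height. -/
def IsUnmixed {R : Type*} [CommRing R] (J : Ideal R) : Prop :=
  ∀ p ∈ associatedPrimes R (R ⧸ J), ∀ q ∈ associatedPrimes R (R ⧸ J),
    idealHeight p = idealHeight q
lemma abs_det_le_prod_colsum {n : ℕ} (A : Matrix (Fin n) (Fin n) ℝ)
    (h0 : ∀ i j, 0 ≤ A i j) : |A.det| ≤ ∏ j, ∑ i, A i j := by
  rw [Matrix.det_apply]
  calc |∑ σ : Equiv.Perm (Fin n), Equiv.Perm.sign σ • ∏ i, A (σ i) i|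
      ≤ ∑ σ : Equiv.Perm (Fin n), |Equiv.Perm.sign σ • ∏ i, A (σ i) i| :=
        Finset.abs_sum_le_sum_abs _ _
    _ = ∑ σ : Equiv.Perm (Fin n), ∏ i, A (σ i) i := by
        refine Finset.sum_congr rfl fun σ _ => ?_
        rcases Int.units_eq_one_or (Equiv.Perm.sign σ) with h | h <;>
          simp [h, abs_of_nonneg (Finset.prod_nonneg fun i _ => h0 _ _)]
    _ = ∑ f ∈ Finset.univ.image (fun σ : Equiv.Perm (Fin n) => (σ : Fin n → Fin n)),
          ∏ i, A (f i) i := by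
        rw [Finset.sum_image (fun a _ b _ h => Equiv.coe_fn_injective h)]
    _ ≤ ∑ f : Fin n → Fin n, ∏ i, A (f i) i :=
        Finset.sum_le_sum_of_subset_of_nonneg (Finset.subset_univ _)
          (fun f _ _ => Finset.prod_nonneg fun i _ => h0 _ _)
    _ = ∏ i, ∑ j, A j i := by
        rw [Finset.prod_univ_sum]
        rw [Fintype.piFinset_univ]

/-- bound on the cofactors of the defining equation of the hyperplane through
`s` affinely independent lattice points of coordinate sum at most `d`. The `(1,i)`-cofactor
`a'_i` of the `(s+1)×(s+1)` determinant (first row `(x_1,...,x_s,1)`, remaining rows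
`(α_{i1},...,α_{is},1)`) satisfies `|a'_i| ≤ s·d^(s-1)`. -/
theorem abs_cofactor_le (s d : ℕ) (hd : 1 ≤ d) (α : Fin s → Fin s → ℕ)
    (hsum : ∀ i, ∑ j, α i j ≤ d)
    (haff : AffineIndependent ℝ (fun i : Fin s => (fun j => (α i j : ℝ) : Fin s → ℝ)))
    (N : Matrix (Fin s) (Fin (s + 1)) ℝ)
    (hN : ∀ i j, N i j = if h : (j : ℕ) < s then (α i ⟨j, h⟩ : ℝ) else 1)
    (a' : Fin s → ℝ)
    (ha' : ∀ i : Fin s, a' i = (-1 : ℝ) ^ ((i : ℕ) + 2) *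
      (N.submatrix id (Fin.succAbove i.castSucc)).det) :
    ∀ i, |a' i| ≤ (s : ℝ) * (d : ℝ) ^ (s - 1) := by

  intro i
  rw [ha' i, abs_mul, abs_pow, abs_neg, abs_one, one_pow, one_mul]
  set M : Matrix (Fin s) (Fin s) ℝ := N.submatrix id (Fin.succAbove i.castSucc) with hM
  obtain ⟨n, rfl⟩ : ∃ n, s = n + 1 := ⟨s - 1, (Nat.succ_pred_eq_of_pos i.pos).symm⟩
  -- generic value bound for succAbove
  have hval : ∀ (m : ℕ) (p : Fin (m + 1)) (j : Fin m),
      ((p.succAbove j : Fin (m + 1)) : ℕ) ≤ (j : ℕ) + 1 := by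
    intro m p j
    rw [Fin.succAbove]
    split <;> simp
  -- last column of M is all ones
  have hlastcol : ∀ k, M k (Fin.last n) = 1 := by
    intro k
    have h1 : Fin.succAbove i.castSucc (Fin.last n) = Fin.last (n + 1) := by
      rw [Fin.succAbove_of_le_castSucc]
      · exact Fin.succ_last n
      · rw [Fin.le_def]
        simp only [Fin.coe_castSucc, Fin.val_last]
        exact Nat.lt_succ_iff.mp i.isLt
    simp only [hM, Matrix.submatrix_apply, id, h1, hN]
    rw [dif_neg]
    simp
  -- the minor matrices
  have hminor : ∀ k : Fin (n + 1),
      |(M.submatrix k.succAbove (Fin.last n).succAbove).det| ≤ (d : ℝ) ^ n := by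
    intro k
    set B := M.submatrix k.succAbove (Fin.last n).succAbove with hB
    have hcval : ∀ b : Fin n,
        ((Fin.succAbove i.castSucc ((Fin.last n).succAbove b) : Fin (n + 2)) : ℕ) < n + 1 := by
      intro b
      have h1 := hval (n + 1) i.castSucc ((Fin.last n).succAbove b)
      have h2 : (((Fin.last n).succAbove b : Fin (n + 1)) : ℕ) = (b : ℕ) := by
        rw [Fin.succAbove_last]; simp
      have := b.isLt
      omega
    set c : Fin n → Fin (n + 1) := fun b => ⟨_, hcval b⟩ with hc
    have hcinj : Function.Injective c := by
      intro a b hab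
      have : Fin.succAbove i.castSucc ((Fin.last n).succAbove a) =
          Fin.succAbove i.castSucc ((Fin.last n).succAbove b) :=
        Fin.ext (congrArg Fin.val hab : (c a).val = (c b).val)
      exact (Fin.last n).succAbove_right_injective
        (i.castSucc.succAbove_right_injective this)
    have hBentry : ∀ a b, B a b = (α (k.succAbove a) (c b) : ℝ) := by
      intro a b
      simp only [hB, hM, Matrix.submatrix_apply, id, hN]
      rw [dif_pos (hcval b)]
    have hB0 : ∀ a b, 0 ≤ B a b := by
      intro a b; rw [hBentry]; positivity
    have hrowsum : ∀ a, ∑ b, B a b ≤ (d : ℝ) := by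
      intro a
      have h1 : ∑ b, B a b = ∑ j ∈ Finset.univ.image c, (α (k.succAbove a) j : ℝ) := by
        rw [Finset.sum_image fun x _ y _ h => hcinj h]
        exact Finset.sum_congr rfl fun b _ => hBentry a b
      rw [h1]
      calc ∑ j ∈ Finset.univ.image c, (α (k.succAbove a) j : ℝ)
          ≤ ∑ j : Fin (n + 1), (α (k.succAbove a) j : ℝ) :=
            Finset.sum_le_sum_of_subset_of_nonneg (Finset.subset_univ _)
              (fun _ _ _ => by positivity)
        _ ≤ (d : ℝ) := by
            rw [← Nat.cast_sum]
            exact_mod_cast hsum (k.succAbove a)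
    calc |B.det| = |B.transpose.det| := by rw [Matrix.det_transpose]
      _ ≤ ∏ j, ∑ a, B.transpose a j := abs_det_le_prod_colsum _ fun a b => hB0 b a
      _ = ∏ a, ∑ b, B a b := rfl
      _ ≤ ∏ _a : Fin n, (d : ℝ) := Finset.prod_le_prod
          (fun a _ => Finset.sum_nonneg fun b _ => hB0 a b) (fun a _ => hrowsum a)
      _ = (d : ℝ) ^ n := by rw [Finset.prod_const, Finset.card_univ, Fintype.card_fin]
  rw [Matrix.det_succ_column M (Fin.last n)]
  calc |∑ k : Fin (n + 1), (-1 : ℝ) ^ ((k : ℕ) + (Fin.last n : ℕ)) * M k (Fin.last n) *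
        (M.submatrix k.succAbove (Fin.last n).succAbove).det|
      ≤ ∑ k : Fin (n + 1), |(-1 : ℝ) ^ ((k : ℕ) + (Fin.last n : ℕ)) * M k (Fin.last n) *
        (M.submatrix k.succAbove (Fin.last n).succAbove).det| :=
        Finset.abs_sum_le_sum_abs _ _
    _ ≤ ∑ _k : Fin (n + 1), (d : ℝ) ^ n := by
        refine Finset.sum_le_sum fun k _ => ?_
        rw [abs_mul, abs_mul, abs_pow, abs_neg, abs_one, one_pow, one_mul, hlastcol, abs_one,
          one_mul]
        exact hminor k
    _ = ((n + 1 : ℕ) : ℝ) * (d : ℝ) ^ n := by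
        rw [Finset.sum_const, Finset.card_univ, Fintype.card_fin, nsmul_eq_mul]
    _ = ((n + 1 : ℕ) : ℝ) * (d : ℝ) ^ (n + 1 - 1) := rfl
end

section
/- Let I be a monomial ideal in R = k[x_1,...,x_r] and F ⊆ [r]. Let I[F] ⊆ R[F] = k[x_i : i ∉ F] be the ideal obtained from I by setting x_i = 1 for all i ∈ F. Then for every n ≥ 1, the integral closure commutes with this restriction: \overline{I^n}[F] = \overline{I[F]^n}. -/
open MvPolynomial Pointwise

open Classical in
/-- the restriction map `R → R[F] = k[x_i : i ∉ F]` setting `x_i = 1` for `i ∈ F`. -/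
noncomputable def restrictMap (k : Type*) [Field k] (r : ℕ) (F : Set (Fin r)) :
    MvPolynomial (Fin r) k →ₐ[k] MvPolynomial {i : Fin r // i ∉ F} k :=
  aeval (fun i => if h : i ∈ F then 1 else X ⟨i, h⟩)

open Classical in
lemma restrict_comp_rename {k : Type*} [Field k] {r : ℕ} (F : Set (Fin r)) (p) :
    (restrictMap k r F) (rename (Subtype.val : {i : Fin r // i ∉ F} → Fin r) p) = p := by
  have h : (restrictMap k r F).comp (rename (Subtype.val : {i : Fin r // i ∉ F} → Fin r))
      = AlgHom.id k _ := by
    apply algHom_ext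
    intro j
    simp [restrictMap, j.prop]
  simpa using congrArg (fun f => f p) h

open Classical in
lemma restrict_monomial_one {k : Type*} [Field k] {r : ℕ} (F : Set (Fin r)) (d : Fin r →₀ ℕ)
    (hd : ∀ i, d i ≠ 0 → i ∈ F) : restrictMap k r F (monomial d (1:k)) = 1 := by
  rw [restrictMap, aeval_monomial, map_one, one_mul]
  apply Finset.prod_eq_one
  intro i hi
  simp only []
  rw [dif_pos (hd i (Finsupp.mem_support_iff.mp hi))]
  exact one_pow _

open Classical in
lemma mono_key {k : Type*} [Field k] {r : ℕ} (F : Set (Fin r)) (a : Fin r →₀ ℕ) :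
    monomial (a.filter (· ∈ F)) (1:k) *
      rename (Subtype.val : {i : Fin r // i ∉ F} → Fin r) (restrictMap k r F (monomial a (1:k)))
      = monomial a (1:k) := by
  have h1 : rename (Subtype.val : {i : Fin r // i ∉ F} → Fin r)
      (restrictMap k r F (monomial a (1:k)))
      = ∏ i ∈ a.support, (if i ∈ F then 1 else X i) ^ a i := by
    rw [restrictMap, aeval_monomial, map_one, one_mul, Finsupp.prod, map_prod]
    refine Finset.prod_congr rfl fun i hi => ?_
    rw [map_pow]
    by_cases h : i ∈ F <;> simp [h]
  have h2 : monomial (a.filter (· ∈ F)) (1:k) = ∏ i ∈ a.support, (if i ∈ F then X i ^ a i else 1) := by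
    rw [monomial_eq, C_1, one_mul, Finsupp.prod_filter_index, Finsupp.support_filter,
      Finset.prod_filter]
  rw [h1, h2, ← Finset.prod_mul_distrib, monomial_eq, C_1, one_mul, Finsupp.prod]
  refine Finset.prod_congr rfl fun i hi => ?_
  by_cases h : i ∈ F <;> simp [h]

open Classical in
lemma baseA {k : Type*} [Field k] {r : ℕ} (F : Set (Fin r))
    (I : Ideal (MvPolynomial (Fin r) k)) (hI : IsMonomialIdeal I)
    (z : MvPolynomial {i : Fin r // i ∉ F} k) (hz : z ∈ Ideal.map (restrictMap k r F) I) :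
    ∃ d : Fin r →₀ ℕ, (∀ i, d i ≠ 0 → i ∈ F) ∧
      monomial d (1:k) * rename (Subtype.val : {i : Fin r // i ∉ F} → Fin r) z ∈ I := by
  obtain ⟨S, hS⟩ := hI
  rw [hS, Ideal.map_span, ← Set.image_comp] at hz
  refine Submodule.span_induction ?_ ?_ ?_ ?_ hz
  · rintro x ⟨a, haS, rfl⟩
    refine ⟨a.filter (· ∈ F), fun i h => ?_, ?_⟩
    · by_contra hiF
      exact h (Finsupp.filter_apply_neg _ _ hiF)
    · rw [Function.comp_apply, mono_key, hS]
      exact Ideal.subset_span ⟨a, haS, rfl⟩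
  · exact ⟨0, by simp, by simp⟩
  · rintro x y - - ⟨d1, hd1, hx⟩ ⟨d2, hd2, hy⟩
    refine ⟨d1 + d2, fun i h => ?_, ?_⟩
    · rcases Nat.eq_zero_or_pos (d1 i) with h1 | h1
      · exact hd2 i (by simpa [Finsupp.add_apply, h1] using h)
      · exact hd1 i (h1.ne')
    · rw [map_add, mul_add]
      have : monomial (d1 + d2) (1:k) = monomial d2 1 * monomial d1 1 := by
        rw [monomial_mul, one_mul, add_comm]
      rw [this]
      exact Ideal.add_mem _ (by rw [mul_assoc]; exact Ideal.mul_mem_left _ _ hx)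
        (by rw [mul_comm (monomial d2 1) (monomial d1 1), mul_assoc]
            exact Ideal.mul_mem_left _ _ hy)
  · rintro c x - ⟨d, hd, hx⟩
    refine ⟨d, hd, ?_⟩
    rw [smul_eq_mul, map_mul]
    have : monomial d (1:k) * (rename Subtype.val c * rename Subtype.val x)
        = rename Subtype.val c * (monomial d 1 * rename Subtype.val x) := by ring
    rw [this]
    exact Ideal.mul_mem_left _ _ hx

open Classical in
lemma memA {k : Type*} [Field k] {r : ℕ} (F : Set (Fin r))
    (I : Ideal (MvPolynomial (Fin r) k)) (hI : IsMonomialIdeal I) (t : ℕ)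
    (z : MvPolynomial {i : Fin r // i ∉ F} k) (hz : z ∈ (Ideal.map (restrictMap k r F) I) ^ t) :
    ∃ d : Fin r →₀ ℕ, (∀ i, d i ≠ 0 → i ∈ F) ∧
      monomial d (1:k) * rename (Subtype.val : {i : Fin r // i ∉ F} → Fin r) z ∈ I ^ t := by
  induction t generalizing z with
  | zero => exact ⟨0, by simp, by simp⟩
  | succ t ih =>
    rw [pow_succ] at hz
    refine Submodule.mul_induction_on hz (fun m hm n hn => ?_) (fun x y hx hy => ?_)
    · obtain ⟨d1, hd1, hm'⟩ := ih m hm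
      obtain ⟨d2, hd2, hn'⟩ := baseA F I hI n hn
      refine ⟨d1 + d2, fun i h => ?_, ?_⟩
      · rcases Nat.eq_zero_or_pos (d1 i) with h1 | h1
        · exact hd2 i (by simpa [Finsupp.add_apply, h1] using h)
        · exact hd1 i (h1.ne')
      · rw [map_mul, pow_succ]
        have : monomial (d1 + d2) (1:k) * (rename (Subtype.val : {i : Fin r // i ∉ F} → Fin r) m *
            rename (Subtype.val : {i : Fin r // i ∉ F} → Fin r) n)
            = (monomial d1 1 * rename (Subtype.val : {i : Fin r // i ∉ F} → Fin r) m) *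
              (monomial d2 1 * rename (Subtype.val : {i : Fin r // i ∉ F} → Fin r) n) := by
          have e : (monomial (d1 + d2)) (1:k) = monomial d1 1 * monomial d2 1 := by
            rw [monomial_mul, one_mul]
          rw [e]; ring
        rw [this]
        exact Ideal.mul_mem_mul hm' hn'
    · obtain ⟨d1, hd1, hx'⟩ := hx
      obtain ⟨d2, hd2, hy'⟩ := hy
      refine ⟨d1 + d2, fun i h => ?_, ?_⟩
      · rcases Nat.eq_zero_or_pos (d1 i) with h1 | h1
        · exact hd2 i (by simpa [Finsupp.add_apply, h1] using h)
        · exact hd1 i (h1.ne')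
      · rw [map_add, mul_add]
        have e : monomial (d1 + d2) (1:k) = monomial d2 1 * monomial d1 1 := by
          rw [monomial_mul, one_mul, add_comm]
        rw [e]
        refine Ideal.add_mem _ (by rw [mul_assoc]; exact Ideal.mul_mem_left _ _ hx')
          (by rw [mul_comm (monomial d2 1) (monomial d1 1), mul_assoc]
              exact Ideal.mul_mem_left _ _ hy')

/-- integral closure commutes with the restriction `I ↦ I[F]`:
`\overline{I^n}[F] = \overline{I[F]^n}`. -/
theorem intClosure_restrict {k : Type*} [Field k] {r : ℕ}
    (I : Ideal (MvPolynomial (Fin r) k)) (hI : IsMonomialIdeal I)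
    (F : Set (Fin r)) (n : ℕ) (hn : 1 ≤ n)
    (J : Ideal (MvPolynomial (Fin r) k)) (hJ : IsIntClosure (I ^ n) J)
    (J' : Ideal (MvPolynomial {i : Fin r // i ∉ F} k))
    (hJ' : IsIntClosure ((Ideal.map (restrictMap k r F) I) ^ n) J') :
    Ideal.map (restrictMap k r F) J = J' := by
  classical
  apply le_antisymm
  · rw [Ideal.map_le_iff_le_comap]
    intro x hx
    obtain ⟨m, hm, a, ha, heq⟩ := (hJ x).mp hx
    rw [Ideal.mem_comap, hJ' _]
    refine ⟨m, hm, fun i => restrictMap k r F (a i), fun i => ?_, ?_⟩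
    · have h2 := Ideal.mem_map_of_mem (restrictMap k r F) (ha i)
      rwa [Ideal.map_pow, Ideal.map_pow] at h2
    · have h3 := congrArg (restrictMap k r F) heq
      simpa using h3
  · intro y hy
    obtain ⟨m, hm, a, ha, heq⟩ := (hJ' y).mp hy
    choose d hdF hd using fun i : ℕ => memA F I hI (n * i) (a i)
      (by have h4 := ha i; rwa [pow_mul]; )
    set u : MvPolynomial (Fin r) k := ∏ j ∈ Finset.Icc 1 m, monomial (d j) (1:k) with hu
    set c : ℕ → MvPolynomial (Fin r) k :=
      fun i => if i ∈ Finset.Icc 1 m then u ^ i *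
        rename (Subtype.val : {i : Fin r // i ∉ F} → Fin r) (a i) else 0 with hc
    set x := u * rename (Subtype.val : {i : Fin r // i ∉ F} → Fin r) y with hx
    have hφu : restrictMap k r F u = 1 := by
      rw [hu, map_prod]
      exact Finset.prod_eq_one fun j _ => restrict_monomial_one F (d j) (hdF j)
    have hcmem : ∀ i, c i ∈ (I ^ n) ^ i := by
      intro i
      rw [hc]
      by_cases hi : i ∈ Finset.Icc 1 m
      · simp only [if_pos hi]
        obtain ⟨hi1, hi2⟩ := Finset.mem_Icc.mp hi
        obtain ⟨v, hv⟩ : monomial (d i) (1:k) ∣ u ^ i :=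
          dvd_pow (Finset.dvd_prod_of_mem _ hi) (by omega)
        rw [hv, ← pow_mul]
        have e : monomial (d i) (1:k) * v *
            rename (Subtype.val : {i : Fin r // i ∉ F} → Fin r) (a i)
            = v * (monomial (d i) 1 * rename (Subtype.val : {i : Fin r // i ∉ F} → Fin r) (a i)) := by
          ring
        rw [e]
        exact Ideal.mul_mem_left _ _ (hd i)
      · simp only [if_neg hi]
        exact Ideal.zero_mem _
    have heq2 : x ^ m + ∑ i ∈ Finset.Icc 1 m, c i * x ^ (m - i) = 0 := by
      have e : x ^ m + ∑ i ∈ Finset.Icc 1 m, c i * x ^ (m - i)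
          = u ^ m * rename (Subtype.val : {i : Fin r // i ∉ F} → Fin r)
              (y ^ m + ∑ i ∈ Finset.Icc 1 m, a i * y ^ (m - i)) := by
        rw [map_add, map_sum, mul_add, Finset.mul_sum, map_pow]
        congr 1
        · rw [hx, mul_pow]
        · refine Finset.sum_congr rfl fun i hi => ?_
          obtain ⟨hi1, hi2⟩ := Finset.mem_Icc.mp hi
          rw [hc]
          simp only [if_pos hi]
          rw [map_mul, map_pow, hx, mul_pow]
          have e2 : u ^ i * rename (Subtype.val : {i : Fin r // i ∉ F} → Fin r) (a i) *
              (u ^ (m - i) * rename (Subtype.val : {i : Fin r // i ∉ F} → Fin r) y ^ (m - i))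
              = (u ^ i * u ^ (m - i)) * (rename (Subtype.val : {i : Fin r // i ∉ F} → Fin r) (a i) *
                rename (Subtype.val : {i : Fin r // i ∉ F} → Fin r) y ^ (m - i)) := by
            ring
          rw [e2, ← pow_add, Nat.add_sub_cancel' hi2]
      rw [e, heq, map_zero, mul_zero]
    have hxJ : x ∈ J := (hJ x).mpr ⟨m, hm, c, hcmem, heq2⟩
    have hfx : restrictMap k r F x = y := by
      rw [hx, map_mul, hφu, one_mul, restrict_comp_rename]
    exact hfx ▸ Ideal.mem_map_of_mem _ hxJ
end

section
/- Let I be an unmixed monomial ideal in R = k[x_1,...,x_r] with irredundant primary decomposition I = Q_1 ∩ ... ∩ Q_s into monomial primary ideals. If \overline{I^n} is unmixed for some n ≥ 1, then \overline{I^n} = \overline{Q_1^n} ∩ ... ∩ \overline{Q_s^n}. -/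
open MvPolynomial Pointwise

lemma aux_not_algIndep {k : Type*} [Field k] {r : ℕ} (f : Fin (r+1) → MvPolynomial (Fin r) k) :
    ¬ AlgebraicIndependent k f := by
  intro h
  have hinj : Function.Injective ⇑(MvPolynomial.aeval f) :=
    algebraicIndependent_iff_injective_aeval.mp h
  set d : ℕ := (Finset.univ.sup fun i => (f i).totalDegree) + 1 with hd
  have hdf : ∀ i, (f i).totalDegree ≤ d := by
    intro i
    have h1 : (f i).totalDegree ≤ Finset.univ.sup fun i => (f i).totalDegree := by
      simpa using Finset.le_sup (f := fun j => (f j).totalDegree) (Finset.mem_univ i)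
    omega
  set C : ℕ := (r+1)*d + 1 with hC
  set t : ℕ := C^r + 1 with ht
  set N : ℕ := (r+1)*t with hN
  set M : ℕ := N*d with hM
  let e : (Fin (r+1) → Fin (t+1)) → (Fin (r+1) →₀ ℕ) := fun v =>
    Finsupp.equivFunOnFinite.symm (fun j => (v j : ℕ))
  have he : Function.Injective e := by
    intro v w hvw
    funext j
    have h1 : ((v j : ℕ)) = (w j : ℕ) := by
      have := congrArg (fun z => (Finsupp.equivFunOnFinite z) j) hvw
      simpa [e] using this
    exact Fin.ext h1
  have hmon : LinearIndependent k
      (fun v : (Fin (r+1) → Fin (t+1)) => (monomial (e v) (1:k))) := by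
    have h1 := (MvPolynomial.basisMonomials (Fin (r+1)) k).linearIndependent
    have h2 := h1.comp e he
    simp only [MvPolynomial.coe_basisMonomials] at h2
    exact h2
  have hgi : LinearIndependent k
      (fun v : (Fin (r+1) → Fin (t+1)) => (MvPolynomial.aeval f) (monomial (e v) (1:k))) := by
    have h1 := hmon.map' (MvPolynomial.aeval f).toLinearMap (LinearMap.ker_eq_bot.mpr hinj)
    exact h1
  have hsum : ∀ v : (Fin (r+1) → Fin (t+1)), ((e v).sum fun _ n => n) ≤ N := by
    intro v
    have h1 : ((e v).sum fun _ n => n) ≤ ∑ j : Fin (r+1), (e v) j := by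
      rw [Finsupp.sum]
      exact Finset.sum_le_sum_of_subset (Finset.subset_univ _)
    refine h1.trans ?_
    have h2 : ∀ j : Fin (r+1), (e v) j ≤ t := by
      intro j
      simp only [e, Finsupp.coe_equivFunOnFinite_symm]
      exact Nat.lt_succ_iff.mp (v j).isLt
    calc ∑ j : Fin (r+1), (e v) j ≤ ∑ _j : Fin (r+1), t := Finset.sum_le_sum fun j _ => h2 j
      _ = (r+1)*t := by simp [Finset.sum_const, mul_comm]
  have hdeg : ∀ v, ((MvPolynomial.aeval f) (monomial (e v) (1:k))).totalDegree ≤ M := by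
    intro v
    rw [MvPolynomial.aeval_monomial, map_one, one_mul]
    rw [Finsupp.prod]
    refine le_trans (MvPolynomial.totalDegree_finset_prod _ _) ?_
    calc ∑ j ∈ (e v).support, (f j ^ (e v) j).totalDegree
        ≤ ∑ j ∈ (e v).support, (e v) j * d := by
          refine Finset.sum_le_sum fun j _ => ?_
          exact le_trans (MvPolynomial.totalDegree_pow _ _)
            (Nat.mul_le_mul_left _ (hdf j))
      _ = ((e v).sum fun _ n => n) * d := by rw [Finsupp.sum, Finset.sum_mul]
      _ ≤ N * d := Nat.mul_le_mul_right _ (hsum v)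
  classical
  let Tfin : Finset (MvPolynomial (Fin r) k) :=
    Finset.image (fun w : Fin r → Fin (M+1) =>
      (monomial (Finsupp.equivFunOnFinite.symm (fun j => ((w j : ℕ)))) (1:k))) Finset.univ
  have hspan : ∀ p : MvPolynomial (Fin r) k, p.totalDegree ≤ M →
      p ∈ Submodule.span k (Tfin : Set (MvPolynomial (Fin r) k)) := by
    intro p hp
    have hps := MvPolynomial.as_sum p
    rw [hps]
    apply Submodule.sum_mem
    intro β hβ
    have h1 : (monomial β (MvPolynomial.coeff β p) : MvPolynomial (Fin r) k)
        = (MvPolynomial.coeff β p) • monomial β (1:k) := by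
      rw [MvPolynomial.smul_monomial, smul_eq_mul, mul_one]
    rw [h1]
    apply Submodule.smul_mem
    apply Submodule.subset_span
    have hβM : ∀ j, β j ≤ M := by
      intro j
      have hs : (β.sum fun _ n => n) ≤ p.totalDegree := MvPolynomial.le_totalDegree hβ
      have h2 : β j ≤ β.sum fun _ n => n := by
        by_cases hz : β j = 0
        · simp [hz]
        · exact Finset.single_le_sum (f := fun a => β a) (fun _ _ => Nat.zero_le _)
            (Finsupp.mem_support_iff.mpr hz)
      omega
    refine Finset.mem_coe.mpr (Finset.mem_image.mpr
      ⟨fun j => ⟨β j, Nat.lt_succ_of_le (hβM j)⟩, Finset.mem_univ _, ?_⟩)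
    congr 1
    ext j
    simp
  let W : Submodule k (MvPolynomial (Fin r) k) :=
    Submodule.span k (Tfin : Set (MvPolynomial (Fin r) k))
  let g' : (Fin (r+1) → Fin (t+1)) → W := fun v =>
    ⟨(MvPolynomial.aeval f) (monomial (e v) (1:k)), hspan _ (hdeg v)⟩
  have hg' : LinearIndependent k g' := by
    apply LinearIndependent.of_comp W.subtype
    exact hgi
  have hcard := hg'.fintype_card_le_finrank
  rw [Fintype.card_fun] at hcard
  have h2 : Module.finrank k W ≤ Tfin.card := finrank_span_finset_le_card Tfin
  have h3 : Tfin.card ≤ (M+1)^r := by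
    refine le_trans Finset.card_image_le ?_
    simp [Fintype.card_fun]
  have hb : (t+1)^(r+1) ≤ (M+1)^r := by
    have := hcard.trans (h2.trans h3)
    simpa using this
  have ht1 : 1 ≤ t := Nat.le_add_left _ _
  have hM1 : M + 1 ≤ C * t := by
    have h4 : M = (r+1)*d*t := by rw [hM, hN]; ring
    have h5 : C * t = (r+1)*d*t + t := by rw [hC]; ring
    omega
  have h4 : (M+1)^r ≤ (C*t)^r := Nat.pow_le_pow_left hM1 r
  have h5 : (C*t)^r < t^(r+1) := by
    rw [mul_pow, pow_succ]
    have htr : 0 < t^r := Nat.pow_pos ht1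
    calc C^r * t^r < t * t^r := by
          exact Nat.mul_lt_mul_of_lt_of_le (by omega) le_rfl htr
      _ = t^r * t := by ring
  have h6 : t^(r+1) < (t+1)^(r+1) := Nat.pow_lt_pow_left (Nat.lt_succ_self t) (Nat.succ_ne_zero r)
  omega

lemma aux_chain_algIndep {K R : Type*} [Field K] [CommRing R] [Algebra K R] {n : ℕ}
    (q : Fin (n + 2) → Ideal R) (hprime : ∀ i, (q i).IsPrime)
    (hmono : ∀ i : Fin (n+1), q i.castSucc ≤ q i.succ)
    (a : Fin (n + 1) → R)
    (ha1 : ∀ i : Fin (n+1), a i ∈ q i.succ)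
    (ha2 : ∀ i : Fin (n+1), a i ∉ q i.castSucc) :
    AlgebraicIndependent K a := by
  classical
  rw [algebraicIndependent_iff]
  intro P hP
  by_contra hP0
  have hsupp : P.support.Nonempty := MvPolynomial.support_nonempty.mpr hP0
  set Ls : Finset (Lex (Fin (n+1) →₀ ℕ)) := P.support.image toLex with hLsdef
  have hLsne : Ls.Nonempty := hsupp.image _
  obtain ⟨α, hαs, hα⟩ := Finset.mem_image.mp (Finset.min'_mem Ls hLsne)
  have hαmin : ∀ β ∈ P.support, toLex α ≤ toLex β := by
    intro β hβ
    rw [hα]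
    exact Finset.min'_le _ _ (Finset.mem_image_of_mem _ hβ)
  have hkey : ∀ β ∈ P.support, ∀ i : Fin (n+1),
      (∀ j : Fin (n+1), j < i → β j = α j) → β i ≠ α i → α i < β i := by
    intro β hβ i hagree hne
    have hlt : toLex α < toLex β := by
      refine lt_of_le_of_ne (hαmin β hβ) (fun hc => hne ?_)
      have := toLex.injective hc
      rw [this]
    rw [Finsupp.Lex.lt_iff] at hlt
    obtain ⟨i0, hi0a, hi0b⟩ := hlt
    simp only [ofLex_toLex] at hi0a hi0b
    rcases lt_trichotomy i0 i with hlt' | heq | hgt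
    · exact absurd (hagree i0 hlt').symm (ne_of_lt hi0b)
    · rwa [heq] at hi0b
    · exact absurd (hi0a i hgt) (fun hc => hne hc.symm)
  set c : (Fin (n+1) →₀ ℕ) → R := fun β => algebraMap K R (MvPolynomial.coeff β P) with hcdef
  set S : ℕ → Finset (Fin (n+1) →₀ ℕ) := fun m =>
    P.support.filter (fun β => ∀ j : Fin (n+1), (j:ℕ) < m → β j = α j) with hSdef
  set T : ℕ → R := fun m =>
    ∑ β ∈ S m, c β * ∏ j : Fin (n+1), (if (j:ℕ) < m then 1 else a j ^ (β j)) with hTdef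
  have hT0 : T 0 = 0 := by
    have h1 : S 0 = P.support := by
      rw [hSdef]
      exact Finset.filter_true_of_mem (fun β _ => fun j hj => absurd hj (Nat.not_lt_zero _))
    have h2 : T 0 = MvPolynomial.aeval a P := by
      rw [hTdef]
      simp only [h1, Nat.not_lt_zero, if_false]
      rw [MvPolynomial.aeval_def, MvPolynomial.eval₂_eq']
    rw [h2, hP]
  have hstep : ∀ m : ℕ, m ≤ n + 1 → T (n + 1 - m) ∉ q ⟨n + 1 - m, by omega⟩ := by
    intro m
    induction m with
    | zero =>
      intro _
      simp only [Nat.sub_zero]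
      have hSn : S (n+1) = {α} := by
        rw [hSdef]
        ext β
        simp only [Finset.mem_filter, Finset.mem_singleton]
        constructor
        · rintro ⟨hβ, hcond⟩
          exact Finsupp.ext (fun j => hcond j j.isLt)
        · rintro rfl
          exact ⟨hαs, fun j _ => rfl⟩
      have hTn : T (n+1) = c α := by
        rw [hTdef]
        simp only [hSn, Finset.sum_singleton]
        have : ∀ j : Fin (n+1), (if (j:ℕ) < n+1 then (1:R) else a j ^ (α j)) = 1 := by
          intro j; simp [j.isLt]
        rw [Finset.prod_congr rfl (fun j _ => this j), Finset.prod_const_one, mul_one]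
      rw [hTn]
      intro hc
      have hc0 : MvPolynomial.coeff α P ≠ 0 := MvPolynomial.mem_support_iff.mp hαs
      have hu : IsUnit (c α) := (IsUnit.mk0 _ hc0).map (algebraMap K R)
      exact (hprime _).ne_top (Ideal.eq_top_of_isUnit_mem _ hc hu)
    | succ m ih =>
      intro hm1
      have hii : n + 1 - (m+1) < n + 1 := by omega
      set i := n + 1 - (m+1) with hidef
      have hi1 : n + 1 - m = i + 1 := by omega
      set ii : Fin (n+1) := ⟨i, hii⟩ with hiidef
      intro hTi
      have hval : (ii:ℕ) = i := rfl
      have hsub : S (i+1) ⊆ S i := by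
        intro β hβ
        simp only [hSdef, Finset.mem_filter] at hβ ⊢
        exact ⟨hβ.1, fun j hj => hβ.2 j (by omega)⟩
      have hβgt : ∀ β ∈ S i \ S (i+1), α ii < β ii := by
        intro β hβ
        rw [Finset.mem_sdiff] at hβ
        obtain ⟨hβ1, hβ2⟩ := hβ
        simp only [hSdef, Finset.mem_filter] at hβ1 hβ2
        have hβs : β ∈ P.support := hβ1.1
        have hagree : ∀ j : Fin (n+1), (j:ℕ) < i → β j = α j := hβ1.2
        have hne : β ii ≠ α ii := by
          intro hc
          apply hβ2
          refine ⟨hβs, fun j hj => ?_⟩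
          rcases Nat.lt_or_ge (j:ℕ) i with h' | h'
          · exact hagree j h'
          · have hji : (j:ℕ) = i := by omega
            have hjii : j = ii := Fin.ext hji
            rw [hjii]; exact hc
        exact hkey β hβs ii (fun j hj => hagree j (by rwa [Fin.lt_def, hval] at hj)) hne
      have hgeneric : ∀ β : (Fin (n+1) →₀ ℕ),
          (∏ j : Fin (n+1), (if (j:ℕ) < i then (1:R) else a j ^ (β j)))
          = a ii ^ (β ii) * ∏ j : Fin (n+1), (if (j:ℕ) < i+1 then (1:R) else a j ^ (β j)) := by
        intro β
        have hL := Finset.mul_prod_erase Finset.univ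
          (fun j : Fin (n+1) => (if (j:ℕ) < i then (1:R) else a j ^ (β j))) (Finset.mem_univ ii)
        have hR := Finset.mul_prod_erase Finset.univ
          (fun j : Fin (n+1) => (if (j:ℕ) < i+1 then (1:R) else a j ^ (β j))) (Finset.mem_univ ii)
        have herase : ∏ j ∈ Finset.univ.erase ii, (if (j:ℕ) < i then (1:R) else a j ^ (β j))
            = ∏ j ∈ Finset.univ.erase ii, (if (j:ℕ) < i+1 then (1:R) else a j ^ (β j)) := by
          refine Finset.prod_congr rfl (fun j hj => ?_)
          have hjne : j ≠ ii := (Finset.mem_erase.mp hj).1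
          have hji : (j:ℕ) ≠ i := fun hc => hjne (Fin.ext hc)
          by_cases h' : (j:ℕ) < i
          · rw [if_pos h', if_pos (by omega)]
          · rw [if_neg h', if_neg (by omega)]
        rw [← hL, ← hR, herase]
        simp only [hval]
        rw [if_neg (lt_irrefl i), if_pos (Nat.lt_succ_self i), one_mul]
      set V : R := ∑ β ∈ S i \ S (i+1), c β * (a ii ^ (β ii - (α ii + 1)) *
        ∏ j : Fin (n+1), (if (j:ℕ) < i+1 then (1:R) else a j ^ (β j))) with hVdef
      have hTsplit : T i = a ii ^ (α ii) * (T (i+1) + a ii * V) := by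
        simp only [hTdef, hVdef]
        rw [← Finset.sum_sdiff hsub]
        have h1 : ∀ β ∈ S (i+1), c β * ∏ j : Fin (n+1), (if (j:ℕ) < i then (1:R) else a j ^ (β j))
            = a ii ^ (α ii) * (c β * ∏ j : Fin (n+1), (if (j:ℕ) < i+1 then (1:R) else a j ^ (β j))) := by
          intro β hβ
          have hβii : β ii = α ii := by
            simp only [hSdef, Finset.mem_filter] at hβ
            exact hβ.2 ii (by rw [hval]; exact Nat.lt_succ_self i)
          rw [hgeneric β, hβii]
          ring
        have h2 : ∀ β ∈ S i \ S (i+1), c β * ∏ j : Fin (n+1), (if (j:ℕ) < i then (1:R) else a j ^ (β j))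
            = a ii ^ (α ii) * (a ii * (c β * (a ii ^ (β ii - (α ii + 1)) *
              ∏ j : Fin (n+1), (if (j:ℕ) < i+1 then (1:R) else a j ^ (β j))))) := by
          intro β hβ
          have hgt := hβgt β hβ
          rw [hgeneric β]
          have hpow : a ii ^ (α ii) * (a ii * a ii ^ (β ii - (α ii + 1))) = a ii ^ (β ii) := by
            have he : α ii + (1 + (β ii - (α ii + 1))) = β ii := by omega
            have h7 : a ii * a ii ^ (β ii - (α ii + 1)) = a ii ^ (1 + (β ii - (α ii + 1))) := by
              rw [pow_add, pow_one]
            rw [h7, ← pow_add, he]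
          rw [← hpow]
          ring
        rw [Finset.sum_congr rfl h2, Finset.sum_congr rfl h1]
        rw [← Finset.mul_sum, ← Finset.mul_sum, ← Finset.mul_sum]
        ring
      have hcase := (hprime ⟨i, by omega⟩).mem_or_mem (hTsplit ▸ hTi)
      rcases hcase with hc1 | hc2
      · have ha' : a ii ∈ q ⟨i, by omega⟩ := (hprime _).mem_of_pow_mem _ hc1
        exact ha2 ii ha'
      · have hle : q (⟨i, by omega⟩ : Fin (n+2)) ≤ q ⟨i+1, by omega⟩ := hmono ii
        have h3 : T (i+1) + a ii * V ∈ q ⟨i+1, by omega⟩ := hle hc2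
        have h4 : a ii * V ∈ q (⟨i+1, by omega⟩ : Fin (n+2)) :=
          Ideal.mul_mem_right _ _ (ha1 ii)
        have h5 : T (i+1) ∈ q (⟨i+1, by omega⟩ : Fin (n+2)) := by
          have h6 := Ideal.sub_mem _ h3 h4
          simpa using h6
        have hmle : m ≤ n + 1 := by omega
        have h6 := ih hmle
        apply h6
        have e1 : T (n+1-m) = T (i+1) := by rw [hi1]
        rw [e1]
        have e2 : (⟨n+1-m, by omega⟩ : Fin (n+2)) = ⟨i+1, by omega⟩ := Fin.ext hi1
        rw [e2]
        exact h5
  have hfin := hstep (n+1) le_rfl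
  apply hfin
  have e1 : T (n+1-(n+1)) = T 0 := by rw [Nat.sub_self]
  rw [e1, hT0]
  exact zero_mem _

lemma aux_height_le {k : Type*} [Field k] {r : ℕ} (x : PrimeSpectrum (MvPolynomial (Fin r) k)) :
    Order.height x ≤ (r : ℕ∞) := by
  refine Order.height_le (fun p _ => ?_)
  by_contra hlen
  push_neg at hlen
  have hrlt : r + 1 ≤ p.length := by
    have := hlen
    rw [show ((r:ℕ∞) < (p.length : ℕ∞)) ↔ r < p.length from by exact_mod_cast Iff.rfl] at this
    omega
  let q : Fin (r + 2) → Ideal (MvPolynomial (Fin r) k) := fun i =>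
    (p.toFun ⟨(i : ℕ), by omega⟩).asIdeal
  have hq : ∀ i, (q i).IsPrime := fun i => (p.toFun _).isPrime
  have hlt : ∀ i : Fin (r+1), q i.castSucc < q i.succ := by
    intro i
    have h1 : p.toFun ⟨((i.castSucc : Fin (r+2)) : ℕ), by omega⟩ <
        p.toFun ⟨((i.succ : Fin (r+2)) : ℕ), by omega⟩ := by
      apply p.strictMono
      rw [Fin.lt_def]
      simp [Fin.val_succ]
    exact h1
  have hmono : ∀ i : Fin (r+1), q i.castSucc ≤ q i.succ := fun i => (hlt i).le
  have hex : ∀ i : Fin (r+1), ∃ y, y ∈ q i.succ ∧ y ∉ q i.castSucc := by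
    intro i
    exact SetLike.exists_of_lt (hlt i)
  choose a ha1 ha2 using hex
  exact aux_not_algIndep a (aux_chain_algIndep q hq hmono a ha1 ha2)

lemma aux_minimalPrime_isAssociated {R : Type*} [CommRing R] [IsNoetherianRing R]
    {J : Ideal R} {q : Ideal R} (hq : q ∈ J.minimalPrimes) :
    q ∈ associatedPrimes R (R ⧸ J) := by
  classical
  obtain ⟨t, ⟨htinf, htprim, _htrad, htirr⟩⟩ : ∃ t : Finset (Ideal R), Submodule.IsMinimalPrimaryDecomposition J t :=
    Ideal.IsLasker.minimal (Ideal.isLasker R R) J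
  have hqp : q.IsPrime := hq.1.1
  have hJq : J ≤ q := hq.1.2
  have hprodle : t.prod id ≤ q := le_trans Ideal.prod_le_inf (le_trans (le_of_eq htinf) hJq)
  obtain ⟨P, hPt, hPq⟩ := (hqp.prod_le).mp hprodle
  have hradP : P.radical ≤ q := hqp.radical_le_iff.mpr hPq
  have hJP : J ≤ P.radical :=
    le_trans (le_of_eq htinf.symm) (le_trans (Finset.inf_le hPt) Ideal.le_radical)
  have hPprim : P.IsPrimary := htprim hPt
  have hqrad : q = P.radical := by
    have hpr : (P.radical).IsPrime := Ideal.isPrime_radical hPprim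
    exact le_antisymm (hq.2 ⟨hpr, hJP⟩ hradP) hradP
  have hy : ¬ ((t.erase P).inf id ≤ P) := htirr hPt
  rw [SetLike.not_le_iff_exists] at hy
  obtain ⟨y, hy1, hy2⟩ := hy
  set A : Ideal R := J.colon (Ideal.span {y}) with hAdef
  have hmemA : ∀ z : R, z ∈ A ↔ z * y ∈ J := by
    intro z
    rw [hAdef, ← Ideal.submodule_span_eq, Submodule.mem_colon_span_singleton, smul_eq_mul]
  have hAP : ∀ z : R, z ∈ A ↔ z * y ∈ P := by
    intro z
    rw [hmemA]
    constructor
    · intro h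
      have h2 : z * y ∈ t.inf id := by rw [htinf]; exact h
      exact (Finset.inf_le (f := id) hPt) h2
    · intro h
      rw [← htinf]
      rw [Finset.inf_eq_iInf]
      rw [Ideal.mem_iInf]
      intro P'
      rw [Ideal.mem_iInf]
      intro hP'
      by_cases hPP : P' = P
      · rw [hPP]; exact h
      · have hyP' : y ∈ P' := by
          have h3 : (t.erase P).inf id ≤ id P' := Finset.inf_le (Finset.mem_erase.mpr ⟨hPP, hP'⟩)
          exact h3 hy1
        exact Ideal.mul_mem_left _ _ hyP'
  have hPA : P ≤ A := by
    intro z hz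
    rw [hAP]
    exact Ideal.mul_mem_right _ _ hz
  have hAq : A ≤ P.radical := by
    intro z hz
    have h1 : y * z ∈ P := by rw [mul_comm]; exact (hAP z).mp hz
    rcases (Ideal.isPrimary_iff.mp hPprim).2 h1 with h2 | h2
    · exact absurd h2 hy2
    · exact h2
  have hAradq : A.radical = q := by
    rw [hqrad]
    refine le_antisymm ?_ (le_trans (Ideal.radical_mono hPA) le_rfl)
    · have h1 : A.radical ≤ (P.radical).radical := Ideal.radical_mono hAq
      rwa [Ideal.radical_idem] at h1
  have hAprimary : A.IsPrimary := by
    rw [Ideal.isPrimary_iff]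
    constructor
    · intro hAtop
      have h1 : (1:R) ∈ A := hAtop ▸ Submodule.mem_top
      have h2 := (hAP 1).mp h1
      rw [one_mul] at h2
      exact hy2 h2
    · intro x z hxz
      have h1 : (x * y) * z ∈ P := by
        have h2 := (hAP _).mp hxz
        have h3 : (x * y) * z = (x * z) * y := by ring
        rw [h3]
        exact h2
      rcases (Ideal.isPrimary_iff.mp hPprim).2 h1 with h2 | h2
      · exact Or.inl ((hAP x).mpr h2)
      · refine Or.inr ?_
        rw [hAradq, hqrad]
        exact h2
  -- transfer associated primes
  have hsingle : associatedPrimes R (R ⧸ A) = {q} := by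
    rw [associatedPrimes.eq_singleton_of_isPrimary hAprimary, hAradq]
  set f : R →ₗ[R] (R ⧸ J) := LinearMap.toSpanSingleton R (R ⧸ J) (Ideal.Quotient.mk J y) with hfdef
  have hker : LinearMap.ker f = A := by
    ext z
    rw [LinearMap.mem_ker, hfdef, LinearMap.toSpanSingleton_apply, hmemA]
    constructor
    · intro h
      have h2 : Ideal.Quotient.mk J (z * y) = 0 := h
      rwa [Ideal.Quotient.eq_zero_iff_mem] at h2
    · intro h
      show Ideal.Quotient.mk J (z * y) = 0
      rwa [Ideal.Quotient.eq_zero_iff_mem]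
  have hsub : associatedPrimes R (R ⧸ A) ⊆ associatedPrimes R (R ⧸ J) := by
    rw [← hker]
    rw [LinearEquiv.AssociatedPrimes.eq f.quotKerEquivRange]
    exact associatedPrimes.subset_of_injective (Submodule.injective_subtype _)
  exact hsub (hsingle ▸ rfl)

lemma aux_idealHeight_eq {R : Type*} [CommRing R] (A : Ideal R) (hA : A.IsPrime) :
    idealHeight A = Order.height (⟨A, hA⟩ : PrimeSpectrum R) := by
  apply le_antisymm
  · exact iInf₂_le (⟨A, hA⟩ : PrimeSpectrum R) le_rfl
  · refine le_iInf₂ (fun p hp => ?_)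
    exact Order.height_mono (show (⟨A, hA⟩ : PrimeSpectrum R) ≤ p from hp)

lemma aux_height_ne {k : Type*} [Field k] {r : ℕ} {A B : Ideal (MvPolynomial (Fin r) k)}
    (hA : A.IsPrime) (hB : B.IsPrime) (hAB : A < B) : idealHeight A ≠ idealHeight B := by
  rw [aux_idealHeight_eq A hA, aux_idealHeight_eq B hB]
  have hlt : (⟨A, hA⟩ : PrimeSpectrum (MvPolynomial (Fin r) k)) < ⟨B, hB⟩ := hAB
  have hfin : Order.height (⟨A, hA⟩ : PrimeSpectrum (MvPolynomial (Fin r) k)) < ⊤ :=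
    lt_of_le_of_lt (aux_height_le _) (by exact_mod_cast lt_top_iff_ne_top.mpr (by simp))
  exact ne_of_lt (Order.height_strictMono hlt hfin)

/-- if `I = Q_1 ∩ ... ∩ Q_s` is an irredundant primary decomposition of an
unmixed monomial ideal and `\overline{I^n}` is unmixed, then
`\overline{I^n} = \overline{Q_1^n} ∩ ... ∩ \overline{Q_s^n}`. -/
theorem intClosure_pow_of_unmixed_primary_decomposition {k : Type*} [Field k] {r : ℕ}
    (I : Ideal (MvPolynomial (Fin r) k)) (hI : IsMonomialIdeal I) (hunmixed : IsUnmixed I)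
    (s : ℕ) (hs : 1 ≤ s) (Q : Fin s → Ideal (MvPolynomial (Fin r) k))
    (hQmon : ∀ i, IsMonomialIdeal (Q i)) (hQprimary : ∀ i, (Q i).IsPrimary)
    (hdecomp : I = ⨅ i, Q i)
    (hirred₁ : ∀ i j, i ≠ j → (Q i).radical ≠ (Q j).radical)
    (hirred₂ : ∀ i, (⨅ j ∈ Finset.univ.erase i, Q j) ≠ I)
    (n : ℕ) (hn : 1 ≤ n)
    (J : Ideal (MvPolynomial (Fin r) k)) (hJ : IsIntClosure (I ^ n) J)
    (hJunmixed : IsUnmixed J)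
    (JQ : Fin s → Ideal (MvPolynomial (Fin r) k))
    (hJQ : ∀ i, IsIntClosure ((Q i) ^ n) (JQ i)) :
    J = ⨅ i, JQ i := by
  classical
  have hIQ : ∀ i, I ≤ Q i := fun i => hdecomp ▸ iInf_le Q i
  have hprodI : (Finset.univ.prod Q) ≤ I := by
    refine le_trans Ideal.prod_le_inf ?_
    rw [Finset.inf_eq_iInf, hdecomp]
    simp
  -- easy direction
  apply le_antisymm
  · refine le_iInf (fun i => ?_)
    intro x hx
    rw [hJQ i x]
    obtain ⟨m, hm, a, ha, heq⟩ := (hJ x).mp hx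
    exact ⟨m, hm, a, fun l => Ideal.pow_right_mono (Ideal.pow_right_mono (hIQ i) n) l (ha l), heq⟩
  -- hard direction
  intro x hx
  rw [Ideal.mem_iInf] at hx
  by_contra hxJ
  have hne : Ideal.Quotient.mk J x ≠ 0 := fun hc => hxJ (Ideal.Quotient.eq_zero_iff_mem.mp hc)
  obtain ⟨p, hpass, hple⟩ :=
    exists_le_isAssociatedPrime_of_isNoetherianRing (MvPolynomial (Fin r) k)
      (Ideal.Quotient.mk J x) hne
  have hpprime : p.IsPrime := hpass.isPrime
  have hcolon : ∀ z : MvPolynomial (Fin r) k, z * x ∈ J → z ∈ p := by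
    intro z hz
    apply hple
    rw [Submodule.mem_colon_singleton, Submodule.mem_bot]
    show Ideal.Quotient.mk J (z * x) = 0
    rwa [Ideal.Quotient.eq_zero_iff_mem]
  have hJp : J ≤ p := by
    intro z hz
    exact hcolon z (Ideal.mul_mem_right x J hz)
  -- I^n ≤ J
  have hInJ : I ^ n ≤ J := by
    intro z hz
    rw [hJ z]
    refine ⟨1, one_pos, fun l => if l = 1 then -z else 0, ?_, ?_⟩
    · intro l
      dsimp only
      by_cases hl : l = 1
      · rw [hl, if_pos rfl, pow_one]
        exact neg_mem hz
      · rw [if_neg hl]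
        exact zero_mem _
    · simp
  -- membership power fact : z ∈ J → ∃ m > 0, z ^ m ∈ I ^ n
  have hJpow : ∀ z ∈ J, ∃ m : ℕ, 0 < m ∧ z ^ m ∈ I ^ n := by
    intro z hz
    obtain ⟨m, hm, a, ha, heq⟩ := (hJ z).mp hz
    refine ⟨m, hm, ?_⟩
    have hsum : ∑ l ∈ Finset.Icc 1 m, a l * z ^ (m - l) ∈ I ^ n := by
      refine Submodule.sum_mem _ (fun l hl => ?_)
      have hl1 : l ≠ 0 := by
        have := (Finset.mem_Icc.mp hl).1; omega
      exact Ideal.mul_mem_right _ _ (Ideal.pow_le_self hl1 (ha l))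
    have hz' : z ^ m = -(∑ l ∈ Finset.Icc 1 m, a l * z ^ (m - l)) :=
      eq_neg_of_add_eq_zero_left heq
    rw [hz']
    exact neg_mem hsum
  have hIp : I ≤ p := by
    intro z hz
    have h1 : z ^ n ∈ I ^ n := Ideal.pow_mem_pow hz n
    exact hpprime.mem_of_pow_mem n (hJp (hInJ h1))
  obtain ⟨i0, _, hQi0p⟩ := (hpprime.prod_le).mp (le_trans hprodI hIp)
  -- uniqueness of i0
  have hunique : ∀ j, j ≠ i0 → ¬ (Q j ≤ p) := by
    intro j hj hQjp
    have hr1 : (Q i0).radical ≤ p := hpprime.radical_le_iff.mpr hQi0p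
    have hr2 : (Q j).radical ≤ p := hpprime.radical_le_iff.mpr hQjp
    have hrne : (Q i0).radical ≠ (Q j).radical := hirred₁ i0 j (Ne.symm hj)
    -- q0 < p for q0 one of the radicals
    have hq0 : ∃ l : Fin s, (Q l).radical < p := by
      by_cases hcase : (Q i0).radical = p
      · exact ⟨j, lt_of_le_of_ne hr2 (fun hc => hrne (hcase.trans hc.symm))⟩
      · exact ⟨i0, lt_of_le_of_ne hr1 hcase⟩
    obtain ⟨l, hl⟩ := hq0
    haveI hlprime : ((Q l).radical).IsPrime := Ideal.isPrime_radical (hQprimary l)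
    have hJql : J ≤ (Q l).radical := by
      intro z hz
      obtain ⟨m, hm, hzm⟩ := hJpow z hz
      have h1 : z ^ m ∈ Q l := (le_trans (Ideal.pow_le_self (by omega)) (hIQ l)) hzm
      exact Ideal.mem_radical_of_pow_mem (m := m) (Ideal.le_radical h1)
    obtain ⟨qm, hqm, hqmle⟩ := Ideal.exists_minimalPrimes_le hJql
    have hqmass := aux_minimalPrime_isAssociated hqm
    have hqmp : qm < p := lt_of_le_of_lt hqmle hl
    have hqmprime : qm.IsPrime := hqm.1.1
    exact aux_height_ne hqmprime hpprime hqmp (hJunmixed qm hqmass p hpass)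
  -- choose elements outside p
  have hexu : ∀ j : Fin s, j ≠ i0 → ∃ u, u ∈ Q j ∧ u ∉ p := by
    intro j hj
    exact SetLike.not_le_iff_exists.mp (hunique j hj)
  let u : Fin s → MvPolynomial (Fin r) k := fun j =>
    if h : j = i0 then 1 else Classical.choose (hexu j h)
  have hu1 : ∀ j, j ≠ i0 → u j ∈ Q j := by
    intro j hj
    simp only [u, dif_neg hj]
    exact (Classical.choose_spec (hexu j hj)).1
  have hu2 : ∀ j, j ≠ i0 → u j ∉ p := by
    intro j hj
    simp only [u, dif_neg hj]
    exact (Classical.choose_spec (hexu j hj)).2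
  set s0 : MvPolynomial (Fin r) k := ∏ j ∈ Finset.univ.erase i0, (u j) ^ n with hs0def
  have hs0Q : s0 ∈ ∏ j ∈ Finset.univ.erase i0, (Q j) ^ n := by
    refine Ideal.prod_mem_prod (fun j hj => ?_)
    exact Ideal.pow_mem_pow (hu1 j (Finset.mem_erase.mp hj).1) n
  have hs0p : s0 ∉ p := by
    rw [hs0def]
    refine Finset.prod_induction _ (fun z => z ∉ p) ?_ ?_ ?_
    · intro a b ha hb hab
      rcases hpprime.mem_or_mem hab with h | h
      · exact ha h
      · exact hb h
    · exact fun h1 => hpprime.ne_top (Ideal.eq_top_of_isUnit_mem _ h1 isUnit_one)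
    · intro j hj hpow
      exact hu2 j (Finset.mem_erase.mp hj).1 (hpprime.mem_of_pow_mem n hpow)
  -- s0 * x is integral over I^n
  obtain ⟨m, hm, a, ha, heq⟩ := (hJQ i0 x).mp (hx i0)
  have hkey : s0 * x ∈ J := by
    rw [hJ (s0 * x)]
    refine ⟨m, hm, fun l => s0 ^ l * a l, ?_, ?_⟩
    · intro l
      have h1 : s0 ^ l ∈ (∏ j ∈ Finset.univ.erase i0, (Q j) ^ n) ^ l :=
        Ideal.pow_mem_pow hs0Q l
      have h2 : s0 ^ l * a l ∈
          ((∏ j ∈ Finset.univ.erase i0, (Q j) ^ n) * (Q i0) ^ n) ^ l := by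
        rw [mul_pow]
        exact Ideal.mul_mem_mul h1 (ha l)
      have h3 : (∏ j ∈ Finset.univ.erase i0, (Q j) ^ n) * (Q i0) ^ n
          = (Finset.univ.prod Q) ^ n := by
        rw [Finset.prod_erase_mul _ _ (Finset.mem_univ i0), Finset.prod_pow]
      have h4 : ((∏ j ∈ Finset.univ.erase i0, (Q j) ^ n) * (Q i0) ^ n) ^ l ≤ (I ^ n) ^ l := by
        rw [h3]
        exact Ideal.pow_right_mono (Ideal.pow_right_mono hprodI n) l
      exact h4 h2
    · have hrw : ∀ l ∈ Finset.Icc 1 m,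
          s0 ^ l * a l * (s0 * x) ^ (m - l) = s0 ^ m * (a l * x ^ (m - l)) := by
        intro l hl
        have hlm : l ≤ m := (Finset.mem_Icc.mp hl).2
        rw [mul_pow]
        have hpow : s0 ^ l * s0 ^ (m - l) = s0 ^ m := by
          rw [← pow_add]
          congr 1
          omega
        calc s0 ^ l * a l * (s0 ^ (m - l) * x ^ (m - l))
            = (s0 ^ l * s0 ^ (m - l)) * (a l * x ^ (m - l)) := by ring
          _ = s0 ^ m * (a l * x ^ (m - l)) := by rw [hpow]
      rw [Finset.sum_congr rfl hrw, ← Finset.mul_sum, mul_pow]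
      calc s0 ^ m * x ^ m + s0 ^ m * ∑ l ∈ Finset.Icc 1 m, a l * x ^ (m - l)
          = s0 ^ m * (x ^ m + ∑ l ∈ Finset.Icc 1 m, a l * x ^ (m - l)) := by ring
        _ = 0 := by rw [heq, mul_zero]
  exact hs0p (hcolon s0 hkey)
end

section
/- Let Δ = ⟨{1},...,{s}⟩ be the 0-dimensional simplicial complex on vertex set {1,...,s} with s ≥ 3, and let I_Δ = (x_{s+1},...,x_r) + (x_i x_j : 1 ≤ i < j ≤ s) be its Stanley-Reisner ideal in R = k[x_1,...,x_r]. Then the maximal ideal m = (x_1,...,x_r) is an associated prime of R/\overline{I_Δ^2}; in particular x_1x_2x_3 ∉ \overline{I_Δ^2} and m = \overline{I_Δ^2} : (x_1x_2x_3). -/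
open MvPolynomial Pointwise

/-- for `Δ = ⟨{1},...,{s}⟩` with `s ≥ 3` and
`I_Δ = (x_{s+1},...,x_r) + (x_i x_j : 1 ≤ i < j ≤ s)`, the maximal ideal is an associated
prime of `R/\overline{I_Δ^2}`; in particular `x_1x_2x_3 ∉ \overline{I_Δ^2}` and
`m = \overline{I_Δ^2} : (x_1x_2x_3)`. -/
theorem maxIdeal_mem_ass_intClosure_sq {k : Type*} [Field k] (r s : ℕ)
    (hs : 3 ≤ s) (hsr : s ≤ r)
    (I : Ideal (MvPolynomial (Fin r) k))
    (hIdef : I = Ideal.span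
      ({f | ∃ i : Fin r, s ≤ (i : ℕ) ∧ f = X i} ∪
       {f | ∃ i j : Fin r, (i : ℕ) < (j : ℕ) ∧ (j : ℕ) < s ∧ f = X i * X j}))
    (J : Ideal (MvPolynomial (Fin r) k)) (hJ : IsIntClosure (I ^ 2) J) :
    maxIdeal k (Fin r) ∈
      associatedPrimes (MvPolynomial (Fin r) k) (MvPolynomial (Fin r) k ⧸ J) ∧
    (X ⟨0, by omega⟩ * X ⟨1, by omega⟩ * X ⟨2, by omega⟩ : MvPolynomial (Fin r) k) ∉ J ∧
    J.colon (Ideal.span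
        {(X ⟨0, by omega⟩ * X ⟨1, by omega⟩ * X ⟨2, by omega⟩ : MvPolynomial (Fin r) k)}) =
      maxIdeal k (Fin r) := by
  classical
  have key : ∀ a b c : Fin r, (a : ℕ) = 0 → (b : ℕ) = 1 → (c : ℕ) = 2 →
      maxIdeal k (Fin r) ∈
        associatedPrimes (MvPolynomial (Fin r) k) (MvPolynomial (Fin r) k ⧸ J) ∧
      (X a * X b * X c : MvPolynomial (Fin r) k) ∉ J ∧
      J.colon (Ideal.span {(X a * X b * X c : MvPolynomial (Fin r) k)}) =
        maxIdeal k (Fin r) := by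
    intro a b c ha hb hc
    set f : MvPolynomial (Fin r) k := X a * X b * X c with hfdef
    have hvar : ∀ i : Fin r, s ≤ (i : ℕ) → X i ∈ I := by
      intro i hi
      rw [hIdef]
      exact Ideal.subset_span (Or.inl ⟨i, hi, rfl⟩)
    have hquad : ∀ i j : Fin r, (i : ℕ) < (j : ℕ) → (j : ℕ) < s → X i * X j ∈ I := by
      intro i j hij hjs
      rw [hIdef]
      exact Ideal.subset_span (Or.inr ⟨i, j, hij, hjs, rfl⟩)
    have hquad' : ∀ i j : Fin r, (i : ℕ) ≠ (j : ℕ) → (i : ℕ) < s → (j : ℕ) < s →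
        X i * X j ∈ I := by
      intro i j hne his hjs
      rcases lt_or_gt_of_ne hne with h | h
      · exact hquad i j h hjs
      · rw [mul_comm]; exact hquad j i h his
    have mem4 : ∀ p q u v : MvPolynomial (Fin r) k,
        p ∈ I → q ∈ I → u ∈ I → v ∈ I → p * q * (u * v) ∈ (I ^ 2) ^ 2 := by
      intro p q u v hp hq hu hv
      have h4 : (I ^ 2) ^ 2 = (I * I) * (I * I) := by rw [pow_two, pow_two]
      rw [h4]
      exact Ideal.mul_mem_mul (Ideal.mul_mem_mul hp hq) (Ideal.mul_mem_mul hu hv)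
    have hmemJ : ∀ g : MvPolynomial (Fin r) k, g ^ 2 ∈ (I ^ 2) ^ 2 → g ∈ J := by
      intro g hg
      rw [hJ]
      refine ⟨2, by norm_num, fun i => if i = 2 then -(g ^ 2) else 0, ?_, ?_⟩
      · intro i
        by_cases h : i = 2
        · subst h; simp only [if_pos rfl]; exact neg_mem hg
        · simp only [if_neg h]; exact zero_mem _
      · rw [Finset.sum_Icc_succ_top (by norm_num : (1 : ℕ) ≤ 2), Finset.Icc_self,
          Finset.sum_singleton]
        norm_num
    have hXfJ : ∀ j : Fin r, X j * f ∈ J := by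
      intro j
      apply hmemJ
      by_cases hjs : (j : ℕ) < s
      · by_cases hj0 : (j : ℕ) = 0
        · have hja : j = a := Fin.ext (by omega)
          subst hja
          have heq2 : (X j * f) ^ 2
              = (X j * X b) * (X j * X b) * ((X j * X c) * (X j * X c)) := by
            rw [hfdef]; ring
          rw [heq2]
          exact mem4 _ _ _ _ (hquad' _ _ (by omega) (by omega) (by omega))
            (hquad' _ _ (by omega) (by omega) (by omega))
            (hquad' _ _ (by omega) (by omega) (by omega))
            (hquad' _ _ (by omega) (by omega) (by omega))
        · by_cases hj1 : (j : ℕ) = 1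
          · have hjb : j = b := Fin.ext (by omega)
            subst hjb
            have heq2 : (X j * f) ^ 2
                = (X a * X j) * (X a * X j) * ((X j * X c) * (X j * X c)) := by
              rw [hfdef]; ring
            rw [heq2]
            exact mem4 _ _ _ _ (hquad' _ _ (by omega) (by omega) (by omega))
              (hquad' _ _ (by omega) (by omega) (by omega))
              (hquad' _ _ (by omega) (by omega) (by omega))
              (hquad' _ _ (by omega) (by omega) (by omega))
          · by_cases hj2 : (j : ℕ) = 2
            · have hjc : j = c := Fin.ext (by omega)
              subst hjc
              have heq2 : (X j * f) ^ 2
                  = (X a * X j) * (X a * X j) * ((X b * X j) * (X b * X j)) := by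
                rw [hfdef]; ring
              rw [heq2]
              exact mem4 _ _ _ _ (hquad' _ _ (by omega) (by omega) (by omega))
                (hquad' _ _ (by omega) (by omega) (by omega))
                (hquad' _ _ (by omega) (by omega) (by omega))
                (hquad' _ _ (by omega) (by omega) (by omega))
            · have heq2 : (X j * f) ^ 2
                  = (X a * X j) * (X b * X j) * ((X a * X c) * (X b * X c)) := by
                rw [hfdef]; ring
              rw [heq2]
              exact mem4 _ _ _ _ (hquad' _ _ (by omega) (by omega) (by omega))
                (hquad' _ _ (by omega) (by omega) (by omega))
                (hquad' _ _ (by omega) (by omega) (by omega))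
                (hquad' _ _ (by omega) (by omega) (by omega))
      · have heq2 : (X j * f) ^ 2
            = X j * X j * ((X a * X b) * ((X b * X c) * (X a * X c))) := by
          rw [hfdef]; ring
        rw [heq2]
        exact mem4 _ _ _ _ (hvar j (by omega)) (hvar j (by omega))
          (hquad' _ _ (by omega) (by omega) (by omega))
          (Ideal.mul_mem_right _ _ (hquad' _ _ (by omega) (by omega) (by omega)))
    -- the substitution homomorphism to k[t]
    set ψ : MvPolynomial (Fin r) k →ₐ[k] Polynomial k :=
      aeval (fun i : Fin r => if (i : ℕ) < s then Polynomial.X else 0) with hψdef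
    have hψX : ∀ i : Fin r, (i : ℕ) < s → ψ (X i) = Polynomial.X := by
      intro i hi; rw [hψdef, aeval_X, if_pos hi]
    have hψX0 : ∀ i : Fin r, ¬(i : ℕ) < s → ψ (X i) = 0 := by
      intro i hi; rw [hψdef, aeval_X, if_neg hi]
    have hψf : ψ f = Polynomial.X ^ 3 := by
      rw [hfdef, map_mul, map_mul, hψX a (by omega), hψX b (by omega), hψX c (by omega)]
      ring
    have hmapI : Ideal.map ψ I ≤ Ideal.span {(Polynomial.X : Polynomial k) ^ 2} := by
      rw [hIdef, Ideal.map_span, Ideal.span_le]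
      rintro _ ⟨g, hg, rfl⟩
      rcases hg with ⟨i, his, rfl⟩ | ⟨i, j, hij, hjs, rfl⟩
      · rw [SetLike.mem_coe, hψX0 i (by omega)]; exact zero_mem _
      · rw [SetLike.mem_coe, map_mul, hψX i (by omega), hψX j hjs, ← pow_two]
        exact Ideal.mem_span_singleton_self _
    have hfnotJ : f ∉ J := by
      intro hf
      obtain ⟨n, hn, aa, haa, heqn⟩ := (hJ f).mp hf
      have hterm : ∀ i ∈ Finset.Icc 1 n,
          ψ (aa i * f ^ (n - i)) ∈ Ideal.span {(Polynomial.X : Polynomial k) ^ (3 * n + 1)} := by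
        intro i hi
        rw [Finset.mem_Icc] at hi
        have h2 : ψ (aa i) ∈ Ideal.map ψ ((I ^ 2) ^ i) := Ideal.mem_map_of_mem _ (haa i)
        rw [← pow_mul, Ideal.map_pow] at h2
        have h3 := Ideal.pow_right_mono hmapI (2 * i) h2
        rw [Ideal.span_singleton_pow, ← pow_mul, show 2 * (2 * i) = 4 * i by ring] at h3
        obtain ⟨cc, hcc⟩ := Ideal.mem_span_singleton'.mp h3
        rw [map_mul, map_pow, hψf, ← hcc, ← pow_mul, mul_assoc, ← pow_add,
          Ideal.mem_span_singleton]
        exact Dvd.dvd.mul_left (pow_dvd_pow _ (by omega)) cc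
      have hsum : (Polynomial.X : Polynomial k) ^ (3 * n)
          ∈ Ideal.span {(Polynomial.X : Polynomial k) ^ (3 * n + 1)} := by
        have h0 := congrArg ψ heqn
        rw [map_add, map_pow, hψf, map_sum, map_zero, ← pow_mul] at h0
        rw [eq_neg_of_add_eq_zero_left h0]
        exact neg_mem (Ideal.sum_mem _ hterm)
      have hdvd := Ideal.mem_span_singleton.mp hsum
      have hdeg := Polynomial.natDegree_le_of_dvd hdvd
        (pow_ne_zero _ Polynomial.X_ne_zero)
      simp only [Polynomial.natDegree_pow, Polynomial.natDegree_X, mul_one] at hdeg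
      omega
    have hconst : ∀ p : MvPolynomial (Fin r) k,
        p ∈ maxIdeal k (Fin r) ↔ constantCoeff p = 0 := by
      intro p
      rw [maxIdeal, ← Set.image_univ, mem_ideal_span_X_image, constantCoeff_eq]
      constructor
      · intro h
        by_contra hcc
        obtain ⟨i, -, hi⟩ := h 0 (mem_support_iff.mpr hcc)
        simp at hi
      · intro hcc m hm
        by_contra h'
        push_neg at h'
        have hm0 : m = 0 := Finsupp.ext fun i => by simpa using h' i (Set.mem_univ i)
        rw [hm0, mem_support_iff] at hm
        exact hm hcc
    have hker : maxIdeal k (Fin r)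
        = RingHom.ker (constantCoeff : MvPolynomial (Fin r) k →+* k) := by
      ext p; rw [hconst, RingHom.mem_ker]
    have hprime : (maxIdeal k (Fin r)).IsPrime := by
      rw [hker]; exact RingHom.ker_isPrime _
    have hmle : maxIdeal k (Fin r) ≤ J.colon (Ideal.span {f}) := by
      rw [maxIdeal, Ideal.span_le]
      rintro _ ⟨j, rfl⟩
      rw [SetLike.mem_coe, Ideal.mem_colon_span_singleton]
      exact hXfJ j
    have hlem : J.colon (Ideal.span {f}) ≤ maxIdeal k (Fin r) := by
      intro g hg
      rw [Ideal.mem_colon_span_singleton] at hg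
      by_contra hgm
      rw [hconst] at hgm
      have hgc : g - C (constantCoeff g) ∈ maxIdeal k (Fin r) := by
        rw [hconst]; simp
      have h1 : (g - C (constantCoeff g)) * f ∈ J := by
        have h := hmle hgc; rwa [Ideal.mem_colon_span_singleton] at h
      have h2 : f = C (constantCoeff g)⁻¹ * (g * f - (g - C (constantCoeff g)) * f) := by
        rw [show g * f - (g - C (constantCoeff g)) * f = C (constantCoeff g) * f by ring,
          ← mul_assoc, ← C_mul, inv_mul_cancel₀ hgm, C_1, one_mul]
      exact hfnotJ (h2 ▸ J.mul_mem_left _ (J.sub_mem hg h1))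
    have hcolon : J.colon (Ideal.span {f}) = maxIdeal k (Fin r) := le_antisymm hlem hmle
    refine ⟨⟨hprime, Ideal.Quotient.mk J f, ?_⟩, hfnotJ, hcolon⟩
    ext g
    have hc : ∀ g, g ∈ (⊥ : Submodule (MvPolynomial (Fin r) k) (MvPolynomial (Fin r) k ⧸ J)).colon
        {Ideal.Quotient.mk J f} ↔ g ∈ maxIdeal k (Fin r) := by
      intro g
      rw [Submodule.mem_colon_singleton, ← hcolon, Ideal.mem_colon_span_singleton]
      have hsm : g • (Ideal.Quotient.mk J f) = Ideal.Quotient.mk J (g * f) := rfl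
      rw [hsm, Submodule.mem_bot, Ideal.Quotient.eq_zero_iff_mem]
    rw [(Ideal.ext hc : _ = maxIdeal k (Fin r)), hprime.radical]
  exact key _ _ _ rfl rfl rfl
end

section
/- Let Δ be a 0-dimensional simplicial complex (all facets are single vertices) and suppose \overline{I_Δ^n} is Cohen-Macaulay for some n ≥ 2, where I_Δ is the Stanley-Reisner ideal in R = k[x_1,...,x_r]. Then I_Δ is a complete intersection; moreover Δ has at most two vertices. -/
open MvPolynomial Pointwise

namespace Aux13
variable {k : Type*} [Field k] {r : ℕ}

/-- weighted degree of an exponent vector -/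
def wdeg (w : Fin r → ℕ) (a : Fin r →₀ ℕ) : ℕ := a.sum fun i e => e * w i

lemma wdeg_zero (w : Fin r → ℕ) : wdeg w 0 = 0 := Finsupp.sum_zero_index

lemma wdeg_add (w : Fin r → ℕ) (a b : Fin r →₀ ℕ) :
    wdeg w (a + b) = wdeg w a + wdeg w b :=
  Finsupp.sum_add_index' (fun _ => zero_mul _) (fun _ e1 e2 => add_mul e1 e2 _)

lemma wdeg_single (w : Fin r → ℕ) (i : Fin r) (e : ℕ) :
    wdeg w (Finsupp.single i e) = e * w i :=
  Finsupp.sum_single_index (zero_mul _)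

lemma wdeg_smul (w : Fin r → ℕ) (m : ℕ) (a : Fin r →₀ ℕ) :
    wdeg w (m • a) = m * wdeg w a := by
  induction m with
  | zero => simpa using wdeg_zero w
  | succ m ih => rw [succ_nsmul, wdeg_add, ih]; ring

/-- the ideal of polynomials all of whose monomials have weighted degree ≥ c -/
def wIdeal (k : Type*) [Field k] {r : ℕ} (w : Fin r → ℕ) (c : ℕ) :
    Ideal (MvPolynomial (Fin r) k) where
  carrier := {f | ∀ a ∈ f.support, c ≤ wdeg w a}
  add_mem' := by
    classical
    intro f g hf hg a ha
    rcases Finset.mem_union.mp (Finsupp.support_add ha) with h | h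
    · exact hf a h
    · exact hg a h
  zero_mem' := by intro a ha; simp at ha
  smul_mem' := by
    classical
    intro g f hf a ha
    rw [smul_eq_mul] at ha
    obtain ⟨y, _, z, hz, rfl⟩ := Finset.mem_add.mp (MvPolynomial.support_mul g f ha)
    rw [wdeg_add]
    exact le_add_of_le_right (hf z hz)

lemma mem_wIdeal_iff {w : Fin r → ℕ} {c : ℕ} {f : MvPolynomial (Fin r) k} :
    f ∈ wIdeal k w c ↔ ∀ a ∈ f.support, c ≤ wdeg w a := Iff.rfl

lemma wIdeal_antitone {w : Fin r → ℕ} {c d : ℕ} (h : c ≤ d) :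
    wIdeal k w d ≤ wIdeal k w c :=
  fun _ hf a ha => h.trans (hf a ha)

lemma wIdeal_mul {w : Fin r → ℕ} {c d : ℕ} :
    wIdeal k w c * wIdeal k w d ≤ wIdeal k w (c + d) := by
  classical
  refine Ideal.mul_le.mpr fun f hf g hg a ha => ?_
  obtain ⟨y, hy, z, hz, rfl⟩ := Finset.mem_add.mp (MvPolynomial.support_mul f g ha)
  rw [wdeg_add]
  exact add_le_add (hf y hy) (hg z hz)

lemma pow_le_wIdeal {w : Fin r → ℕ} {c : ℕ} {I : Ideal (MvPolynomial (Fin r) k)}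
    (h : I ≤ wIdeal k w c) (m : ℕ) (hm : 1 ≤ m) : I ^ m ≤ wIdeal k w (m * c) := by
  induction m with
  | zero => omega
  | succ m ih =>
    rcases Nat.eq_or_lt_of_le hm with h1 | h1
    · simpa [← h1] using h
    · have hm' : 1 ≤ m := by omega
      calc I ^ (m + 1) = I ^ m * I := pow_succ I m
        _ ≤ wIdeal k w (m * c) * wIdeal k w c := Ideal.mul_mono (ih hm') h
        _ ≤ wIdeal k w (m * c + c) := wIdeal_mul
        _ = wIdeal k w ((m + 1) * c) := by ring_nf

lemma monomial_mem_wIdeal_iff {w : Fin r → ℕ} {c : ℕ} {a : Fin r →₀ ℕ} :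
    monomial a (1 : k) ∈ wIdeal k w c ↔ c ≤ wdeg w a := by
  rw [mem_wIdeal_iff]
  classical
  simp [MvPolynomial.support_monomial]

lemma prod_X_eq_monomial (F : Finset (Fin r)) :
    (∏ i ∈ F, (X i : MvPolynomial (Fin r) k)) =
      monomial (∑ i ∈ F, Finsupp.single i 1) 1 := by
  classical
  induction F using Finset.induction with
  | empty => simp
  | insert _ _ h ih =>
    rw [Finset.prod_insert h, Finset.sum_insert h, ih, MvPolynomial.X,
      MvPolynomial.monomial_mul, one_mul]

lemma wdeg_sum_single (w : Fin r → ℕ) (F : Finset (Fin r)) :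
    wdeg w (∑ i ∈ F, Finsupp.single i 1) = ∑ i ∈ F, w i := by
  classical
  induction F using Finset.induction with
  | empty => simpa using wdeg_zero w
  | insert _ _ h ih =>
    rw [Finset.sum_insert h, Finset.sum_insert h, wdeg_add, ih, wdeg_single, one_mul]
lemma mem_srIdeal_of_pair (Δ : Set (Finset (Fin r))) (hface : ∀ F ∈ Δ, F.card ≤ 1)
    {i j : Fin r} (hij : i ≠ j) : (X i * X j : MvPolynomial (Fin r) k) ∈ srIdeal Δ := by
  classical
  refine Ideal.subset_span ⟨{i, j}, fun hmem => ?_, (Finset.prod_pair hij).symm⟩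
  have := hface _ hmem
  rw [Finset.card_pair hij] at this
  omega

lemma srIdeal_le_wIdeal (Δ : Set (Finset (Fin r))) (hΔ : IsSimplicialComplex Δ)
    (w : Fin r → ℕ) (h1 : ∀ i, 1 ≤ w i) (h2 : ∀ j, {j} ∉ Δ → w j = 2) :
    (srIdeal Δ : Ideal (MvPolynomial (Fin r) k)) ≤ wIdeal k w 2 := by
  rw [srIdeal, Ideal.span_le]
  rintro f ⟨F, hF, rfl⟩
  rw [SetLike.mem_coe, prod_X_eq_monomial, monomial_mem_wIdeal_iff, wdeg_sum_single]
  rcases (show 2 ≤ F.card ∨ F.card = 1 ∨ F.card = 0 by omega) with h | h | h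
  · calc (2:ℕ) ≤ F.card := h
      _ = ∑ _i ∈ F, 1 := by simp
      _ ≤ ∑ i ∈ F, w i := Finset.sum_le_sum fun i _ => h1 i
  · obtain ⟨j, rfl⟩ := Finset.card_eq_one.mp h
    have hj : w j = 2 := h2 j hF
    simp [hj]
  · rw [Finset.card_eq_zero.mp h] at hF
    exact absurd hΔ.1 hF

lemma big_membership (Δ : Set (Finset (Fin r))) (hface : ∀ F ∈ Δ, F.card ≤ 1)
    {p q t : Fin r} (hpq : p ≠ q) (hpt : p ≠ t) (hqt : q ≠ t)
    (n' : ℕ) (a b c : Fin r) :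
    X a * X b * X c * (X p ^ (n' + 1) * X q ^ (n' + 1) * X t) ^ 3 ∈
      (srIdeal Δ : Ideal (MvPolynomial (Fin r) k)) ^ (3 * (n' + 2)) := by
  classical
  set I := (srIdeal Δ : Ideal (MvPolynomial (Fin r) k)) with hI
  have pairmem : ∀ i j : Fin r, i ≠ j → (X i * X j : MvPolynomial (Fin r) k) ∈ I :=
    fun i j hij => mem_srIdeal_of_pair Δ hface hij
  set e : Fin r → MvPolynomial (Fin r) k :=
    fun j => X j * (if j = p then X q else X p) with he_def
  set f : Fin r → MvPolynomial (Fin r) k :=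
    fun j => if j = p then X p * X t else X q * X t with hf_def
  have he : ∀ j, e j ∈ I := by
    intro j
    simp only [he_def]
    split_ifs with h
    · rw [h]; exact pairmem p q hpq
    · exact pairmem j p h
  have hf : ∀ j, f j ∈ I := by
    intro j
    simp only [hf_def]
    split_ifs with h
    · exact pairmem p t hpt
    · exact pairmem q t hqt
  have hef : ∀ j, e j * f j = X j * (X p * X q * X t) := by
    intro j
    simp only [he_def, hf_def]
    split_ifs with h
    · rw [h]; ring
    · ring
  have hid : X a * X b * X c * ((X p : MvPolynomial (Fin r) k) ^ (n' + 1) * X q ^ (n' + 1) * X t) ^ 3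
      = (e a * e b * e c) * (f a * f b * f c) * (X p * X q) ^ (3 * n') := by
    have h1 : (e a * e b * e c) * (f a * f b * f c) * ((X p : MvPolynomial (Fin r) k) * X q) ^ (3 * n')
        = (e a * f a) * (e b * f b) * (e c * f c) * (X p * X q) ^ (3 * n') := by ring
    rw [h1, hef a, hef b, hef c]
    ring
  rw [hid]
  have hNN : 3 * (n' + 2) = 1 + 1 + 1 + (1 + 1 + 1) + 3 * n' := by ring
  rw [hNN]
  simp only [pow_add, pow_one]
  exact Ideal.mul_mem_mul (Ideal.mul_mem_mul
      (Ideal.mul_mem_mul (Ideal.mul_mem_mul (he a) (he b)) (he c))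
      (Ideal.mul_mem_mul (Ideal.mul_mem_mul (hf a) (hf b)) (hf c)))
    (Ideal.pow_mem_pow (pairmem p q hpq) _)
lemma mul_mem_of_maxIdeal {K : Ideal (MvPolynomial (Fin r) k)}
    (y : MvPolynomial (Fin r) k) (hy : ∀ a : Fin r, y * X a ∈ K) :
    ∀ x ∈ maxIdeal k (Fin r), y * x ∈ K := by
  intro x hx
  rw [maxIdeal] at hx
  induction hx using Submodule.span_induction with
  | mem z hz => obtain ⟨a, rfl⟩ := hz; exact hy a
  | zero => simpa using K.zero_mem
  | add z1 z2 _ _ h1 h2 => rw [mul_add]; exact K.add_mem h1 h2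
  | smul c z _ h1 =>
    rw [smul_eq_mul, mul_comm c z, ← mul_assoc]
    exact K.mul_mem_right c h1

lemma triple_mem {K : Ideal (MvPolynomial (Fin r) k)} {u : MvPolynomial (Fin r) k}
    (hbase : ∀ a b c : Fin r, u * X a * X b * X c ∈ K) :
    ∀ x1 ∈ maxIdeal k (Fin r), ∀ x2 ∈ maxIdeal k (Fin r), ∀ x3 ∈ maxIdeal k (Fin r),
      u * x1 * x2 * x3 ∈ K := by
  intro x1 h1 x2 h2 x3 h3
  refine mul_mem_of_maxIdeal (u * x1 * x2) (fun c => ?_) x3 h3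
  rw [show u * x1 * x2 * X c = u * x1 * X c * x2 by ring]
  refine mul_mem_of_maxIdeal (u * x1 * X c) (fun b => ?_) x2 h2
  rw [show u * x1 * X c * X b = u * X b * X c * x1 by ring]
  refine mul_mem_of_maxIdeal (u * X b * X c) (fun a => ?_) x1 h1
  rw [show u * X b * X c * X a = u * X a * X b * X c by ring]
  exact hbase a b c

lemma not_mem_of_wdeg_lt {w : Fin r → ℕ} {c : ℕ} {K J : Ideal (MvPolynomial (Fin r) k)}
    (hJ : IsIntClosure K J) (hK : K ≤ wIdeal k w c) {α : Fin r →₀ ℕ}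
    (hα : wdeg w α < c) : monomial α (1 : k) ∉ J := by
  intro hmem
  obtain ⟨m, hm, a, ha, heq⟩ := (hJ _).mp hmem
  have key : ∀ i ∈ Finset.Icc 1 m,
      a i * (monomial α (1 : k)) ^ (m - i) ∈ wIdeal k w (m * wdeg w α + 1) := by
    intro i hi
    rw [Finset.mem_Icc] at hi
    have hai : a i ∈ wIdeal k w (i * c) := pow_le_wIdeal hK i hi.1 (ha i)
    have hui : (monomial α (1 : k)) ^ (m - i) ∈ wIdeal k w ((m - i) * wdeg w α) := by
      rw [MvPolynomial.monomial_pow, one_pow, monomial_mem_wIdeal_iff, wdeg_smul]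
    have hprod := wIdeal_mul (Ideal.mul_mem_mul hai hui)
    refine wIdeal_antitone ?_ hprod
    obtain ⟨s, rfl⟩ : ∃ s, m = s + i := ⟨m - i, by omega⟩
    rw [Nat.add_sub_cancel]
    nlinarith [hi.1, hα]
  have hsum : (monomial α (1 : k)) ^ m ∈ wIdeal k w (m * wdeg w α + 1) := by
    have h2 : (monomial α (1 : k)) ^ m
        = -∑ i ∈ Finset.Icc 1 m, a i * (monomial α (1 : k)) ^ (m - i) :=
      eq_neg_of_add_eq_zero_left heq
    rw [h2]
    exact neg_mem (Ideal.sum_mem _ key)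
  rw [MvPolynomial.monomial_pow, one_pow, monomial_mem_wIdeal_iff, wdeg_smul] at hsum
  exact Nat.not_succ_le_self _ hsum

lemma J_le_prime {R : Type*} [CommRing R] {K J : Ideal R} (hJ : IsIntClosure K J)
    {P : Ideal R} (hP : P.IsPrime) (hK : K ≤ P) : J ≤ P := by
  intro x hx
  obtain ⟨m, hm, a, ha, heq⟩ := (hJ x).mp hx
  have hxm : x ^ m ∈ P := by
    have h2 : x ^ m = -∑ i ∈ Finset.Icc 1 m, a i * x ^ (m - i) :=
      eq_neg_of_add_eq_zero_left heq
    rw [h2]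
    refine neg_mem (Ideal.sum_mem _ fun i hi => ?_)
    rw [Finset.mem_Icc] at hi
    have hKi : K ^ i ≤ K := Ideal.pow_le_self (by omega)
    exact P.mul_mem_right _ (hK (hKi (ha i)))
  exact hP.mem_of_pow_mem m hxm

lemma quotDepth_eq_zero {R : Type*} [CommRing R] {J m' : Ideal R} (u : R) (hu : u ∉ J)
    (hmul : ∀ x ∈ m', x * u ∈ J) : quotDepth m' J = 0 := by
  have hsub : {n : ℕ | ∃ rs : List R, rs.length = n ∧ (∀ x ∈ rs, x ∈ m') ∧
      RingTheory.Sequence.IsRegular (R ⧸ J) rs} ⊆ {0} := by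
    rintro N ⟨rs, hlen, hmem, hreg⟩
    cases rs with
    | nil => simp only [List.length_nil] at hlen; simp [← hlen]
    | cons x tl =>
      exfalso
      rw [RingTheory.Sequence.isRegular_cons_iff] at hreg
      have hsm := hreg.1
      have hx : x ∈ m' := hmem x List.mem_cons_self
      have h1 : x • (Ideal.Quotient.mk J u) = x • (0 : R ⧸ J) := by
        rw [smul_zero, Algebra.smul_def, Ideal.Quotient.algebraMap_eq, ← map_mul,
          Ideal.Quotient.eq_zero_iff_mem]
        exact hmul x hx
      have h2 := hsm h1
      rw [Ideal.Quotient.eq_zero_iff_mem] at h2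
      exact hu h2
  rw [quotDepth]
  rcases Set.subset_singleton_iff_eq.mp hsub with h | h
  · rw [h]; exact csSup_empty
  · rw [h, csSup_singleton]

lemma srIdeal_le_ker_aeval {S : Type*} [CommRing S] [Algebra k S] (g : Fin r → S)
    (Δ : Set (Finset (Fin r))) (hΔ : IsSimplicialComplex Δ) {p : Fin r} (hp : {p} ∈ Δ)
    (hg : ∀ j, j ≠ p → g j = 0) :
    (srIdeal Δ : Ideal (MvPolynomial (Fin r) k)) ≤ RingHom.ker (MvPolynomial.aeval g) := by
  rw [srIdeal, Ideal.span_le]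
  rintro f ⟨F, hF, rfl⟩
  rw [SetLike.mem_coe, RingHom.mem_ker]
  have hns : ¬ F ⊆ {p} := by
    intro hsubs
    rcases Finset.subset_singleton_iff.mp hsubs with rfl | rfl
    · exact hF hΔ.1
    · exact hF hp
  obtain ⟨j, hjF, hjp⟩ := Finset.not_subset.mp hns
  rw [map_prod]
  refine Finset.prod_eq_zero hjF ?_
  rw [MvPolynomial.aeval_X, hg j (by simpa using hjp)]
end Aux13
open Aux13
/-- if `Δ` is a 0-dimensional simplicial complex and `\overline{I_Δ^n}` is
Cohen-Macaulay for some `n ≥ 2`, then `I_Δ` is a complete intersection (any two distinct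
minimal non-faces, i.e. minimal monomial generators, share no vertex/variable), and `Δ`
has at most two vertices. -/
theorem complete_intersection_of_CM_intClosure_dim_zero {k : Type*} [Field k] {r : ℕ}
    (Δ : Set (Finset (Fin r))) (hΔ : IsSimplicialComplex Δ)
    (hdim : (∀ F ∈ Δ, F.card ≤ 1) ∧ ∃ F ∈ Δ, F.card = 1)
    (n : ℕ) (hn : 2 ≤ n)
    (J : Ideal (MvPolynomial (Fin r) k))
    (hJ : IsIntClosure ((srIdeal Δ : Ideal (MvPolynomial (Fin r) k)) ^ n) J)
    (hCM : QuotIsCM (maxIdeal k (Fin r)) J) :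
    (∀ F G : Finset (Fin r),
      (F ∉ Δ ∧ ∀ F' ⊂ F, F' ∈ Δ) → (G ∉ Δ ∧ ∀ G' ⊂ G, G' ∈ Δ) → F ≠ G → Disjoint F G) ∧
    Set.ncard {i : Fin r | {i} ∈ Δ} ≤ 2 := by
  classical
  have hV2 : Set.ncard {i : Fin r | {i} ∈ Δ} ≤ 2 := by
    by_contra hc
    push_neg at hc
    have hfin : ({i : Fin r | {i} ∈ Δ}).Finite := Set.toFinite _
    obtain ⟨T, hTsub, hT3⟩ := Finset.exists_subset_card_eq (s := hfin.toFinset) (n := 3)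
      (by rw [← Set.ncard_eq_toFinset_card _ hfin]; omega)
    obtain ⟨p, q, t, hpq, hpt, hqt, rfl⟩ := Finset.card_eq_three.mp hT3
    have hvert : ∀ i ∈ ({p, q, t} : Finset (Fin r)), {i} ∈ Δ := by
      intro i hi
      have := hTsub hi
      rwa [Set.Finite.mem_toFinset] at this
    have hp : {p} ∈ Δ := hvert p (by simp)
    have hq : {q} ∈ Δ := hvert q (by simp)
    have ht : {t} ∈ Δ := hvert t (by simp)
    obtain ⟨n', rfl⟩ : ∃ n', n = n' + 2 := ⟨n - 2, by omega⟩
    set I := (srIdeal Δ : Ideal (MvPolynomial (Fin r) k)) with hIdef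
    set w : Fin r → ℕ := fun i => if i = p ∨ i = q ∨ i = t then 1 else 2 with hwdef
    have hw1 : ∀ i, 1 ≤ w i := by
      intro i
      by_cases h : i = p ∨ i = q ∨ i = t <;> simp [hwdef, h]
    have hw2 : ∀ j, {j} ∉ Δ → w j = 2 := by
      intro j hj
      have hj3 : ¬ (j = p ∨ j = q ∨ j = t) := by
        rintro (rfl | rfl | rfl)
        · exact hj hp
        · exact hj hq
        · exact hj ht
      simp [hwdef, hj3]
    have hwp : w p = 1 := by simp [hwdef]
    have hwq : w q = 1 := by simp [hwdef]
    have hwt : w t = 1 := by simp [hwdef]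
    have hIW : I ≤ Aux13.wIdeal k w 2 := Aux13.srIdeal_le_wIdeal Δ hΔ w hw1 hw2
    have hIWn : I ^ (n' + 2) ≤ Aux13.wIdeal k w ((n' + 2) * 2) :=
      Aux13.pow_le_wIdeal hIW _ (by omega)
    set α : Fin r →₀ ℕ :=
      Finsupp.single p (n' + 1) + Finsupp.single q (n' + 1) + Finsupp.single t 1 with hαdef
    have hwα : Aux13.wdeg w α = 2 * n' + 3 := by
      rw [hαdef, Aux13.wdeg_add, Aux13.wdeg_add, Aux13.wdeg_single, Aux13.wdeg_single,
        Aux13.wdeg_single, hwp, hwq, hwt]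
      ring
    set u := monomial α (1 : k) with hudef
    have huprod : (X p ^ (n' + 1) * X q ^ (n' + 1) * X t : MvPolynomial (Fin r) k) = u := by
      rw [hudef, hαdef, X_pow_eq_monomial, X_pow_eq_monomial, MvPolynomial.X,
        MvPolynomial.monomial_mul, MvPolynomial.monomial_mul, one_mul, one_mul]
    have hu_notJ : u ∉ J := by
      refine Aux13.not_mem_of_wdeg_lt hJ hIWn ?_
      rw [hwα]
      omega
    have hbase : ∀ a b c : Fin r, u ^ 3 * X a * X b * X c ∈ I ^ (3 * (n' + 2)) := by
      intro a b c
      rw [show u ^ 3 * X a * X b * X c = X a * X b * X c * u ^ 3 by ring, ← huprod]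
      exact Aux13.big_membership Δ hdim.1 hpq hpt hqt n' a b c
    have hmul : ∀ x ∈ maxIdeal k (Fin r), x * u ∈ J := by
      intro x hx
      refine (hJ _).mpr ⟨3, by norm_num, fun i => if i = 3 then -((x * u) ^ 3) else 0, ?_, ?_⟩
      · intro i
        by_cases hi : i = 3
        · subst hi
          simp only [if_pos rfl]
          refine neg_mem ?_
          have hx3 := Aux13.triple_mem hbase x hx x hx x hx
          rw [show (x * u) ^ 3 = u ^ 3 * x * x * x by ring, ← pow_mul,
            show (n' + 2) * 3 = 3 * (n' + 2) by ring]
          exact hx3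
        · simp only [if_neg hi]
          exact zero_mem _
      · rw [show Finset.Icc 1 3 = ({1, 2, 3} : Finset ℕ) from rfl,
          Finset.sum_insert (by decide), Finset.sum_insert (by decide), Finset.sum_singleton]
        norm_num
    have hdepth : quotDepth (maxIdeal k (Fin r)) J = 0 :=
      Aux13.quotDepth_eq_zero u hu_notJ hmul
    have hdim0 : ringKrullDim (MvPolynomial (Fin r) k ⧸ J) = 0 := by
      have hcm := hCM
      rw [QuotIsCM, hdepth] at hcm
      simpa using hcm.symm
    set φ : MvPolynomial (Fin r) k →ₐ[k] Polynomial k :=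
      MvPolynomial.aeval (fun j => if j = p then (Polynomial.X : Polynomial k) else 0) with hφdef
    have hIφ : I ≤ RingHom.ker φ :=
      Aux13.srIdeal_le_ker_aeval _ Δ hΔ hp (fun j hj => if_neg hj)
    have hkerφPrime : (RingHom.ker φ).IsPrime := RingHom.ker_isPrime φ
    have hJφ : J ≤ RingHom.ker φ :=
      Aux13.J_le_prime hJ hkerφPrime ((Ideal.pow_le_self (by omega)).trans hIφ)
    set ψ : MvPolynomial (Fin r) k →ₐ[k] k := (Polynomial.aeval (0 : k)).comp φ with hψdef
    have hkerψPrime : (RingHom.ker ψ).IsPrime := RingHom.ker_isPrime ψ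
    have hφψ : RingHom.ker φ ≤ RingHom.ker ψ := by
      intro f hf
      rw [RingHom.mem_ker] at hf ⊢
      rw [hψdef, AlgHom.comp_apply, hf, map_zero]
    have hJψ : J ≤ RingHom.ker ψ := hJφ.trans hφψ
    have hXp_phi : X p ∉ RingHom.ker φ := by
      rw [RingHom.mem_ker, hφdef, MvPolynomial.aeval_X, if_pos rfl]
      exact Polynomial.X_ne_zero
    have hXp_psi : X p ∈ RingHom.ker ψ := by
      rw [RingHom.mem_ker, hψdef, AlgHom.comp_apply, hφdef, MvPolynomial.aeval_X, if_pos rfl]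
      simp
    have hsurj : Function.Surjective (Ideal.Quotient.mk J) := Ideal.Quotient.mk_surjective
    have hP1 : (Ideal.map (Ideal.Quotient.mk J) (RingHom.ker φ)).IsPrime :=
      Ideal.map_isPrime_of_surjective hsurj (by rw [Ideal.mk_ker]; exact hJφ)
    have hP2 : (Ideal.map (Ideal.Quotient.mk J) (RingHom.ker ψ)).IsPrime :=
      Ideal.map_isPrime_of_surjective hsurj (by rw [Ideal.mk_ker]; exact hJψ)
    have hmaplt : Ideal.map (Ideal.Quotient.mk J) (RingHom.ker φ)
        < Ideal.map (Ideal.Quotient.mk J) (RingHom.ker ψ) := by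
      refine lt_of_le_of_ne (Ideal.map_mono hφψ) (fun heq => ?_)
      have hmem : Ideal.Quotient.mk J (X p) ∈ Ideal.map (Ideal.Quotient.mk J) (RingHom.ker φ) := by
        rw [heq]
        exact Ideal.mem_map_of_mem _ hXp_psi
      have hcm : X p ∈ Ideal.comap (Ideal.Quotient.mk J)
          (Ideal.map (Ideal.Quotient.mk J) (RingHom.ker φ)) := hmem
      rw [Ideal.comap_map_of_surjective _ hsurj] at hcm
      have : Ideal.comap (Ideal.Quotient.mk J) ⊥ = J := by
        rw [← RingHom.ker, Ideal.mk_ker]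
      rw [this, sup_eq_left.mpr hJφ] at hcm
      exact hXp_phi hcm
    set P1 : PrimeSpectrum (MvPolynomial (Fin r) k ⧸ J) := ⟨_, hP1⟩ with hP1def
    set P2 : PrimeSpectrum (MvPolynomial (Fin r) k ⧸ J) := ⟨_, hP2⟩ with hP2def
    have hPlt : P1 < P2 := by
      rw [← PrimeSpectrum.asIdeal_lt_asIdeal]
      exact hmaplt
    set ch : LTSeries (PrimeSpectrum (MvPolynomial (Fin r) k ⧸ J)) :=
      (RelSeries.singleton _ P1).snoc P2 (by rwa [RelSeries.last_singleton]) with hchdef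
    have hlen := Order.LTSeries.length_le_krullDim ch
    have hch1 : ch.length = 1 := by
      rw [hchdef, RelSeries.snoc_length]
      simp [RelSeries.singleton]
    rw [hch1] at hlen
    rw [ringKrullDim] at hdim0
    rw [hdim0] at hlen
    exact absurd hlen (by decide)
  refine ⟨?_, hV2⟩
  rintro F G ⟨hF, hFmin⟩ ⟨hG, hGmin⟩ hFG
  have hcard_le : ∀ H : Finset (Fin r), H ∉ Δ → (∀ H' ⊂ H, H' ∈ Δ) → H.card ≤ 2 := by
    intro H hH hmin
    by_contra h3
    obtain ⟨H', hsub, hcardH'⟩ := Finset.exists_subset_card_eq (s := H) (n := 2) (by omega)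
    have hss : H' ⊂ H := ⟨hsub, fun hHH' => by have := Finset.card_le_card hHH'; omega⟩
    have := hdim.1 H' (hmin H' hss)
    omega
  have hpos : ∀ H : Finset (Fin r), H ∉ Δ → 1 ≤ H.card := by
    intro H hH
    rcases Finset.eq_empty_or_nonempty H with rfl | hne
    · exact absurd hΔ.1 hH
    · exact Finset.card_pos.mpr hne
  have hvert2 : ∀ H : Finset (Fin r), H.card = 2 → (∀ H' ⊂ H, H' ∈ Δ) →
      (↑H : Set (Fin r)) ⊆ {i : Fin r | {i} ∈ Δ} := by
    intro H h2 hmin i hi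
    rw [Finset.mem_coe] at hi
    have hss : {i} ⊂ H := by
      refine ⟨Finset.singleton_subset_iff.mpr hi, fun hsub => ?_⟩
      have := Finset.card_le_card hsub
      simp at this
      omega
    exact hmin {i} hss
  have hFc := hcard_le F hF hFmin
  have hGc := hcard_le G hG hGmin
  have hFp := hpos F hF
  have hGp := hpos G hG
  rcases (show F.card = 1 ∨ F.card = 2 by omega) with hF1 | hF2
  · obtain ⟨i, rfl⟩ := Finset.card_eq_one.mp hF1
    rcases (show G.card = 1 ∨ G.card = 2 by omega) with hG1 | hG2
    · obtain ⟨j, rfl⟩ := Finset.card_eq_one.mp hG1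
      rw [Finset.disjoint_singleton]
      intro hij
      exact hFG (by rw [hij])
    · rw [Finset.disjoint_left]
      rintro a ha hb
      rw [Finset.mem_singleton] at ha
      subst ha
      have : {a} ∈ Δ := hvert2 G hG2 hGmin (Finset.mem_coe.mpr hb)
      exact hF this
  · rcases (show G.card = 1 ∨ G.card = 2 by omega) with hG1 | hG2
    · obtain ⟨j, rfl⟩ := Finset.card_eq_one.mp hG1
      rw [Finset.disjoint_right]
      rintro a ha hb
      rw [Finset.mem_singleton] at ha
      subst ha
      have : {a} ∈ Δ := hvert2 F hF2 hFmin (Finset.mem_coe.mpr hb)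
      exact hG this
    · exfalso
      have hFV := hvert2 F hF2 hFmin
      have hGV := hvert2 G hG2 hGmin
      have hFeq : (↑F : Set (Fin r)) = {i : Fin r | {i} ∈ Δ} :=
        Set.eq_of_subset_of_ncard_le hFV (by rw [Set.ncard_coe_finset]; omega)
      have hGeq : (↑G : Set (Fin r)) = {i : Fin r | {i} ∈ Δ} :=
        Set.eq_of_subset_of_ncard_le hGV (by rw [Set.ncard_coe_finset]; omega)
      exact hFG (Finset.coe_injective (hFeq.trans hGeq.symm))
end

section
/- Let I be a monomial ideal in R = k[x_1,...,x_r] and let the Newton polyhedron NP(I) be defined by inequalities ⟨a_j, x⟩ ≥ b_j, j = 1,...,q, with a_j ∈ ℕ^r, b_j ∈ ℕ. Then for any α ∈ ℕ^r and n ≥ 1, the simplicial complex Δ_α(\overline{I^n}) = {F ⊆ [r] : x^α ∉ \overline{I^n} R_F} is generated by the faces [r] \ supp(a_j) for those j with ⟨a_j, α⟩ < n b_j. -/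
open MvPolynomial Pointwise

section Aux
variable {k : Type*} [Field k] {r : ℕ}

lemma monomial_prod {ι : Type*} (s : Finset ι) (d : ι → (Fin r →₀ ℕ)) :
    (∏ y ∈ s, monomial (d y) (1 : k)) = monomial (∑ y ∈ s, d y) 1 := by
  classical
  induction s using Finset.induction_on with
  | empty => simp
  | insert _ _ h ih =>
      rw [Finset.prod_insert h, Finset.sum_insert h, ih, monomial_mul, one_mul]

lemma exists_le_of_mem_span_support {T : Set (MvPolynomial (Fin r) k)}
    {E : Set (Fin r →₀ ℕ)}
    (hT : ∀ f ∈ T, ∃ e ∈ E, f = monomial e 1) {g : MvPolynomial (Fin r) k}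
    (hg : g ∈ Ideal.span T) : ∀ δ ∈ g.support, ∃ e ∈ E, e ≤ δ := by
  classical
  refine Submodule.span_induction
    (p := fun g _ => ∀ δ ∈ g.support, ∃ e ∈ E, e ≤ δ) ?_ ?_ ?_ ?_ hg
  · intro f hf δ hδ
    obtain ⟨e, heE, rfl⟩ := hT f hf
    rw [support_monomial, if_neg (one_ne_zero)] at hδ
    rw [Finset.mem_singleton] at hδ
    exact ⟨e, heE, hδ ▸ le_refl e⟩
  · simp
  · intro x y _ _ hx hy δ hδ
    rcases Finset.mem_union.1 (MvPolynomial.support_add hδ) with h | h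
    · exact hx δ h
    · exact hy δ h
  · intro c x _ ih δ hδ
    rw [smul_eq_mul] at hδ
    obtain ⟨u, _, v, hv, rfl⟩ := Finset.mem_add.1 (MvPolynomial.support_mul c x hδ)
    obtain ⟨e, heE, he⟩ := ih v hv
    exact ⟨e, heE, le_trans he (self_le_add_left v u)⟩

lemma ideal_span_set_pow {R : Type*} [CommRing R] (T : Set R) (M : ℕ) :
    Ideal.span T ^ M = Ideal.span (T ^ M) := by
  induction M with
  | zero => simp [Ideal.one_eq_top, Ideal.span_singleton_one]
  | succ m ih => rw [pow_succ, ih, Ideal.span_mul_span', ← pow_succ]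

lemma mem_monomial_set_pow {S : Set (Fin r →₀ ℕ)} {M : ℕ} {f : MvPolynomial (Fin r) k}
    (hf : f ∈ ((fun e => monomial e (1 : k)) '' S) ^ M) :
    ∃ g : Fin M → (Fin r →₀ ℕ), (∀ u, g u ∈ S) ∧ f = monomial (∑ u, g u) 1 := by
  induction M generalizing f with
  | zero =>
      rw [pow_zero, Set.mem_one] at hf
      exact ⟨Fin.elim0, fun u => u.elim0, by simp [hf]⟩
  | succ m ih =>
      rw [pow_succ] at hf
      obtain ⟨x, hx, y, hy, rfl⟩ := Set.mem_mul.1 hf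
      obtain ⟨g, hg, rfl⟩ := ih hx
      obtain ⟨e, heS, rfl⟩ := hy
      refine ⟨Fin.snoc g e, ?_, ?_⟩
      · intro u
        induction u using Fin.lastCases with
        | last => simpa using heS
        | cast i => simpa using hg i
      · rw [monomial_mul, one_mul, Fin.sum_univ_castSucc]
        simp [Fin.snoc_castSucc, Fin.snoc_last]

end Aux

section Char
variable {k : Type*} [Field k] {r q : ℕ}

lemma np_lower_bound (I : Ideal (MvPolynomial (Fin r) k))
    (a : Fin q → Fin r → ℕ) (b : Fin q → ℕ)
    (hNP : newtonPolyhedron I =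
      {x : Fin r → ℝ | ∀ j : Fin q, (b j : ℝ) ≤ ∑ i, (a j i : ℝ) * x i})
    {g : Fin r →₀ ℕ} (hg : monomial g (1 : k) ∈ I) (j : Fin q) :
    b j ≤ ∑ i, a j i * g i := by
  have hmem : (fun i => (g i : ℝ)) ∈ newtonPolyhedron I :=
    subset_convexHull ℝ _ ⟨g, hg, rfl⟩
  rw [hNP] at hmem
  have h : (b j : ℝ) ≤ ∑ i, (a j i : ℝ) * (g i : ℝ) := hmem j
  exact_mod_cast h

lemma monomial_mem_intClosure_iff (I : Ideal (MvPolynomial (Fin r) k))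
    (hI : IsMonomialIdeal I)
    (a : Fin q → Fin r → ℕ) (b : Fin q → ℕ)
    (hNP : newtonPolyhedron I =
      {x : Fin r → ℝ | ∀ j : Fin q, (b j : ℝ) ≤ ∑ i, (a j i : ℝ) * x i})
    (n : ℕ) (hn : 1 ≤ n) (J : Ideal (MvPolynomial (Fin r) k))
    (hJ : IsIntClosure (I ^ n) J) (β : Fin r →₀ ℕ) :
    monomial β (1 : k) ∈ J ↔ ∀ j, n * b j ≤ ∑ i, a j i * β i := by
  classical
  obtain ⟨S, hS⟩ := hI
  constructor
  · intro hβJ j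
    obtain ⟨m, hm, aa, haa, heq⟩ := (hJ _).1 hβJ
    have h1 := congrArg (coeff (m • β)) heq
    rw [coeff_add, coeff_sum, coeff_zero, monomial_pow, one_pow, coeff_monomial,
      if_pos rfl] at h1
    have h2 : ∑ i ∈ Finset.Icc 1 m,
        coeff (m • β) (aa i * monomial β (1:k) ^ (m - i)) = -1 := by
      linear_combination h1
    obtain ⟨i, hi, hne⟩ :=
      Finset.exists_ne_zero_of_sum_ne_zero (h2 ▸ (neg_ne_zero.2 (one_ne_zero (α := k))))
    have hiIcc := Finset.mem_Icc.1 hi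
    have hsplit : m • β = i • β + (m - i) • β := by
      rw [← add_smul]; congr 1; omega
    rw [hsplit, monomial_pow, one_pow, coeff_mul_monomial, mul_one] at hne
    have hsupp : i • β ∈ (aa i).support := mem_support_iff.2 hne
    have hmemi : aa i ∈ Ideal.span (((fun e => monomial e (1:k)) '' S) ^ (n * i)) := by
      have h3 := haa i
      rwa [← pow_mul, hS, ideal_span_set_pow] at h3
    have hTform : ∀ f ∈ ((fun e => monomial e (1:k)) '' S) ^ (n * i),
        ∃ e ∈ {e : Fin r →₀ ℕ | n * i * b j ≤ ∑ i', a j i' * e i'}, f = monomial e 1 := by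
      intro f hf
      obtain ⟨g, hg, rfl⟩ := mem_monomial_set_pow hf
      refine ⟨∑ u, g u, ?_, rfl⟩
      have hgb : ∀ u, b j ≤ ∑ i', a j i' * g u i' := fun u =>
        np_lower_bound I a b hNP (hS ▸ Ideal.subset_span ⟨g u, hg u, rfl⟩) j
      calc n * i * b j = ∑ _u : Fin (n * i), b j := by
            simp [Finset.sum_const, mul_comm]
        _ ≤ ∑ u, ∑ i', a j i' * g u i' := Finset.sum_le_sum fun u _ => hgb u
        _ = ∑ i', a j i' * (∑ u, g u) i' := by
            rw [Finset.sum_comm]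
            refine Finset.sum_congr rfl fun i' _ => ?_
            rw [← Finset.mul_sum]
            congr 1
            simp [Finsupp.finset_sum_apply]
    obtain ⟨e, heE, hele⟩ := exists_le_of_mem_span_support hTform hmemi (i • β) hsupp
    have h3 : ∑ i', a j i' * e i' ≤ ∑ i', a j i' * (i • β) i' :=
      Finset.sum_le_sum fun i' _ => Nat.mul_le_mul_left _ (Finsupp.le_def.1 hele i')
    have h4 : ∑ i', a j i' * (i • β) i' = i * ∑ i', a j i' * β i' := by
      rw [Finset.mul_sum]
      refine Finset.sum_congr rfl fun i' _ => ?_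
      rw [Finsupp.smul_apply, smul_eq_mul]; ring
    have h5 : i * (n * b j) ≤ i * ∑ i', a j i' * β i' := by
      calc i * (n * b j) = n * i * b j := by ring
        _ ≤ ∑ i', a j i' * e i' := heE
        _ ≤ ∑ i', a j i' * (i • β) i' := h3
        _ = i * ∑ i', a j i' * β i' := h4
    exact Nat.le_of_mul_le_mul_left h5 (by omega)
  · intro hcon
    have hn0 : (0:ℝ) < n := by
      have : (0:ℕ) < n := by omega
      exact_mod_cast this
    have hnq : (n:ℚ) ≠ 0 := Nat.cast_ne_zero.2 (by omega)
    set x : Fin r → ℝ := fun i => (β i : ℝ) / n with hxdef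
    have hx : x ∈ convexHull ℝ (expSet I) := by
      have hx' : x ∈ {x : Fin r → ℝ | ∀ j : Fin q, (b j : ℝ) ≤ ∑ i, (a j i : ℝ) * x i} := by
        intro j
        have hc : ((n * b j : ℕ) : ℝ) ≤ ((∑ i, a j i * β i : ℕ) : ℝ) := by
          exact_mod_cast hcon j
        push_cast at hc
        have hsum : ∑ i, (a j i:ℝ) * x i = (∑ i, (a j i:ℝ) * (β i:ℝ)) / n := by
          rw [Finset.sum_div]
          refine Finset.sum_congr rfl fun i _ => ?_
          simp only [hxdef]
          ring
        rw [hsum, le_div_iff₀ hn0]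
        nlinarith
      rw [← hNP] at hx'
      exact hx'
    rw [convexHull_eq_union] at hx
    simp only [Set.mem_iUnion] at hx
    obtain ⟨t, hts, hai, hxt⟩ := hx
    rw [Finset.convexHull_eq] at hxt
    obtain ⟨w, hw0, hw1, hwx⟩ := hxt
    rw [Finset.centerMass_eq_of_sum_1 _ _ hw1] at hwx
    have hch : ∀ y : {z // z ∈ t}, ∃ e : Fin r →₀ ℕ,
        monomial e (1:k) ∈ I ∧ (y : Fin r → ℝ) = fun i => (e i : ℝ) :=
      fun y => hts y.2
    choose E hEI hEc using hch
    -- a ℚ-linear retraction of ℝ onto ℚ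
    have hker : LinearMap.ker (LinearMap.toSpanSingleton ℚ ℝ 1) = ⊥ := by
      rw [LinearMap.ker_eq_bot']
      intro p hp
      rw [LinearMap.toSpanSingleton_apply, smul_eq_zero] at hp
      simpa using hp
    obtain ⟨π, hπ⟩ := (LinearMap.toSpanSingleton ℚ ℝ 1).exists_leftInverse_of_injective hker
    have hπ1 : π 1 = 1 := by
      have h := LinearMap.congr_fun hπ 1
      simpa [LinearMap.toSpanSingleton_apply] using h
    have hπsmul : ∀ (c : ℚ) (z : ℝ), π ((c:ℝ) * z) = c * π z := by
      intro c z
      rw [show (c:ℝ) * z = c • z from (Rat.smul_def c z).symm, map_smul, smul_eq_mul]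
    have hπc : ∀ c : ℚ, π (c:ℝ) = c := fun c => by
      rw [show ((c:ℚ):ℝ) = (c:ℝ) * 1 by ring, hπsmul, hπ1, mul_one]
    set w' : (Fin r → ℝ) → ℚ := fun y => π (w y) with hw'def
    have hsum' : ∑ y ∈ t, w' y = 1 := by
      simp only [hw'def]
      rw [← map_sum, hw1, hπ1]
    have hxq : ∀ i, x i = ((((β i : ℚ)) / n : ℚ) : ℝ) := by
      intro i
      simp only [hxdef]
      push_cast
      ring
    have hxi0 : ∀ i, ∑ y ∈ t.attach, w y.1 * (E y i : ℝ) = x i := by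
      intro i
      have h := congrFun hwx i
      rw [Finset.sum_apply] at h
      rw [← Finset.sum_attach t (fun y => (w y • id y) i)] at h
      rw [← h]
      refine Finset.sum_congr rfl fun y _ => ?_
      simp [hEc y]
    have hrep : ∀ i, ∑ y ∈ t.attach, (E y i : ℚ) * w' y.1 = (β i : ℚ) / n := by
      intro i
      have h := congrArg π (hxi0 i)
      rw [map_sum] at h
      have h2 : ∀ y ∈ t.attach, π (w y.1 * (E y i : ℝ)) = (E y i : ℚ) * w' y.1 := by
        intro y _
        rw [mul_comm (w y.1),
          show ((E y i : ℕ):ℝ) = (((E y i : ℕ):ℚ):ℝ) by push_cast; ring, hπsmul]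
      have h3 : ∑ y ∈ t.attach, (E y i : ℚ) * w' y.1 = π (x i) := by
        rw [← h]
        exact (Finset.sum_congr rfl h2).symm
      rw [h3, hxq i, hπc]
    -- uniqueness of barycentric coordinates: w is rational
    have hsw : ∑ y ∈ t.attach, w y.1 = 1 := by
      rw [Finset.sum_attach t w]; exact hw1
    have hsw' : ∑ y ∈ t.attach, ((w' y.1 : ℚ) : ℝ) = 1 := by
      rw [Finset.sum_attach t (fun z => ((w' z : ℚ) : ℝ))]
      exact_mod_cast hsum'
    have hcomb1 : ∑ y ∈ t.attach, w y.1 • (y.1 : Fin r → ℝ) = x := by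
      funext i
      rw [Finset.sum_apply]
      rw [← hxi0 i]
      refine Finset.sum_congr rfl fun y _ => ?_
      simp [hEc y]
    have hcomb2 : ∑ y ∈ t.attach, ((w' y.1 : ℚ) : ℝ) • (y.1 : Fin r → ℝ) = x := by
      funext i
      rw [Finset.sum_apply]
      have h2 : ∑ y ∈ t.attach, (E y i : ℝ) * ((w' y.1 : ℚ) : ℝ) = (β i : ℝ) / n := by
        have h := hrep i
        have h2' : ((∑ y ∈ t.attach, (E y i : ℚ) * w' y.1 : ℚ) : ℝ)
            = (((β i : ℚ) / n : ℚ) : ℝ) := by rw [h]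
        push_cast at h2'
        exact h2'
      rw [hxq i]
      push_cast
      rw [← h2]
      refine Finset.sum_congr rfl fun y _ => ?_
      simp [hEc y]
      ring
    have hind := hai.indicator_eq_of_affineCombination_eq t.attach t.attach
      (fun y => w y.1) (fun y => ((w' y.1 : ℚ) : ℝ)) hsw hsw'
      (by rw [Finset.affineCombination_eq_linear_combination _ _ _ hsw,
              Finset.affineCombination_eq_linear_combination _ _ _ hsw',
              hcomb1, hcomb2])
    have hw'cast : ∀ y : {z // z ∈ t}, w y.1 = ((w' y.1 : ℚ) : ℝ) := by
      intro y
      have h := congrFun hind y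
      rwa [Set.indicator_of_mem (Finset.mem_coe.2 (t.mem_attach y)),
           Set.indicator_of_mem (Finset.mem_coe.2 (t.mem_attach y))] at h
    have hw'0 : ∀ y : {z // z ∈ t}, 0 ≤ w' y.1 := by
      intro y
      have h0 := hw0 y.1 y.2
      rw [hw'cast y] at h0
      exact_mod_cast h0
    -- clear denominators
    set D := ∏ y ∈ t.attach, (w' y.1).den with hDdef
    have hD : 0 < D := Finset.prod_pos fun y _ => (w' y.1).pos
    obtain ⟨P, hP⟩ : ∃ P : {z // z ∈ t} → ℕ, ∀ y, (P y : ℚ) = w' y.1 * D := by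
      refine ⟨fun y => ((w' y.1) * D).num.toNat, fun y => ?_⟩
      obtain ⟨e, he⟩ := Finset.dvd_prod_of_mem (fun z : {z // z ∈ t} => (w' z.1).den)
        (t.mem_attach y)
      have h2 : w' y.1 * D = (((w' y.1).num * e : ℤ) : ℚ) := by
        rw [hDdef, he]
        push_cast
        rw [← mul_assoc, Rat.mul_den_eq_num]
      have h3 : (0:ℤ) ≤ (w' y.1).num * e := by
        have h4 : (0:ℚ) ≤ w' y.1 * D := mul_nonneg (hw'0 y) (by positivity)
        rw [h2] at h4
        exact_mod_cast h4
      have hnum : ((w' y.1) * D).num = (w' y.1).num * e := by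
        rw [h2, Rat.num_intCast]
      calc ((((w' y.1) * D).num.toNat : ℕ) : ℚ)
          = ((((w' y.1) * D).num.toNat : ℤ) : ℚ) := by push_cast; ring
        _ = (((w' y.1) * D).num : ℚ) := by rw [hnum, Int.toNat_of_nonneg h3, ← hnum]
        _ = w' y.1 * D := by rw [hnum, ← h2]
    have hPsum : ∑ y ∈ t.attach, P y = D := by
      have h : ((∑ y ∈ t.attach, P y : ℕ) : ℚ) = (D : ℚ) := by
        push_cast
        rw [Finset.sum_congr rfl (fun y _ => hP y), ← Finset.sum_mul,
          Finset.sum_attach t (fun z => w' z), hsum', one_mul]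
      exact_mod_cast h
    -- the exponent identity
    have hexp : D • β = ∑ y ∈ t.attach, (n * P y) • E y := by
      ext i
      have h7 : ((β i : ℚ)) = n * (∑ y ∈ t.attach, (E y i : ℚ) * w' y.1) := by
        rw [hrep i, mul_comm, div_mul_cancel₀ _ hnq]
      have h8 : ((D * β i : ℕ) : ℚ) = ((∑ y ∈ t.attach, (n * P y) * E y i : ℕ) : ℚ) := by
        push_cast
        rw [h7, Finset.mul_sum, Finset.mul_sum]
        refine Finset.sum_congr rfl fun y _ => ?_
        rw [hP y]
        ring
      have h9 : D * β i = ∑ y ∈ t.attach, (n * P y) * E y i := by exact_mod_cast h8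
      simp only [Finsupp.smul_apply, Finsupp.finset_sum_apply, smul_eq_mul]
      exact h9
    -- membership in I^(n*D)
    have hmono : monomial (D • β) (1:k)
        = ∏ y ∈ t.attach, (monomial (E y) (1:k)) ^ (n * P y) := by
      rw [hexp, ← monomial_prod]
      refine Finset.prod_congr rfl fun y _ => ?_
      rw [monomial_pow, one_pow]
    have hmemI : monomial (D • β) (1:k) ∈ I ^ (n * D) := by
      rw [hmono]
      have h := Ideal.prod_mem_prod
        (I := fun y : {z // z ∈ t} => I ^ (n * P y))
        (s := t.attach)
        (x := fun y => (monomial (E y) (1:k)) ^ (n * P y))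
        (fun y _ => Ideal.pow_mem_pow (hEI y) _)
      rwa [Finset.prod_pow_eq_pow_sum, ← Finset.mul_sum, hPsum] at h
    -- conclude
    rw [hJ]
    refine ⟨D, hD, fun i => if i = D then -(monomial β (1:k) ^ D) else 0, ?_, ?_⟩
    · intro i
      beta_reduce
      by_cases hiD : i = D
      · rw [if_pos hiD, hiD]
        refine neg_mem ?_
        rw [monomial_pow, one_pow, ← pow_mul]
        exact hmemI
      · rw [if_neg hiD]
        exact zero_mem _
    · beta_reduce
      rw [Finset.sum_eq_single D]
      · rw [if_pos rfl, Nat.sub_self, pow_zero, mul_one]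
        ring
      · intro i _ hiD
        rw [if_neg hiD, zero_mul]
      · intro hD'
        exact absurd (Finset.mem_Icc.2 ⟨hD, le_refl D⟩) hD'

end Char

/-- if the Newton polyhedron `NP(I)` is defined by the inequalities
`⟨a_j, x⟩ ≥ b_j` (`j = 1,...,q`), then for any `α ∈ ℕ^r` and `n ≥ 1` the degree complex
`Δ_α(\overline{I^n})` is generated by the faces `[r] \ supp(a_j)` for those `j` with
`⟨a_j, α⟩ < n b_j`. -/
theorem degComplex_intClosure_pow {k : Type*} [Field k] {r q : ℕ}
    (I : Ideal (MvPolynomial (Fin r) k)) (hI : IsMonomialIdeal I) (hproper : I ≠ ⊤)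
    (a : Fin q → Fin r → ℕ) (b : Fin q → ℕ)
    (hNP : newtonPolyhedron I =
      {x : Fin r → ℝ | ∀ j : Fin q, (b j : ℝ) ≤ ∑ i, (a j i : ℝ) * x i})
    (n : ℕ) (hn : 1 ≤ n)
    (J : Ideal (MvPolynomial (Fin r) k)) (hJ : IsIntClosure (I ^ n) J)
    (α : Fin r →₀ ℕ) :
    ∀ F : Finset (Fin r),
      F ∈ degComplex J α ↔
        ∃ j : Fin q, (∑ i, a j i * α i) < n * b j ∧ ∀ i ∈ F, a j i = 0 := by
  intro F
  classical
  have key := monomial_mem_intClosure_iff I hI a b hNP n hn J hJ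
  simp only [degComplex, Set.mem_setOf_eq]
  constructor
  · intro hF
    by_contra hcon
    push_neg at hcon
    set N := n * Finset.univ.sup b with hN
    set γ : Fin r →₀ ℕ := Finsupp.equivFunOnFinite.symm (fun i => if i ∈ F then N else 0)
      with hγ
    have hγval : ∀ i, γ i = if i ∈ F then N else 0 := by
      intro i; simp [hγ]
    have hγsupp : ∀ i, γ i ≠ 0 → i ∈ F := by
      intro i hi
      by_contra hiF
      rw [hγval i, if_neg hiF] at hi
      exact hi rfl
    refine hF γ hγsupp ?_
    rw [key]
    intro j
    have hbj : n * b j ≤ N := Nat.mul_le_mul_left n (Finset.le_sup (Finset.mem_univ j))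
    by_cases hj : ∑ i, a j i * α i < n * b j
    · obtain ⟨i0, hi0F, hai0⟩ := hcon j hj
      have h1 : n * b j ≤ a j i0 * (α + γ) i0 := by
        have h2 : N ≤ γ i0 := by rw [hγval i0, if_pos hi0F]
        have h3 : γ i0 ≤ (α + γ) i0 := by
          rw [Finsupp.add_apply]; omega
        have h4 := Nat.one_le_iff_ne_zero.2 hai0
        calc n * b j ≤ N := hbj
          _ ≤ γ i0 := h2
          _ ≤ (α + γ) i0 := h3
          _ ≤ a j i0 * (α + γ) i0 := Nat.le_mul_of_pos_left _ (by omega)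
      exact le_trans h1 (Finset.single_le_sum (f := fun i => a j i * (α + γ) i)
        (fun i _ => Nat.zero_le _) (Finset.mem_univ i0))
    · push_neg at hj
      refine le_trans hj (Finset.sum_le_sum fun i _ => ?_)
      apply Nat.mul_le_mul_left
      rw [Finsupp.add_apply]; omega
  · rintro ⟨j, hj1, hj2⟩ γ hγ hmem
    rw [key] at hmem
    have h := hmem j
    have heq : ∑ i, a j i * (α + γ) i = ∑ i, a j i * α i := by
      refine Finset.sum_congr rfl fun i _ => ?_
      rw [Finsupp.add_apply]
      rcases eq_or_ne (γ i) 0 with h0 | h0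
      · rw [h0, add_zero]
      · rw [hj2 i (hγ i h0)]
        ring
    rw [heq] at h
    omega
end
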